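/- arXiv:2407.16033 — 6 statements merged into one kernel-verified Lean document; each statement's English description precedes it below -/
import Mathlib

section
/- Let L be self-adjoint on a Hilbert space with spectrum contained in [1/√P_W, ∞) for some P_W > 0, and let τ > 0. Then the operator inequality 2τ L e^{-τL} (1 - e^{-2τL})^{-1} ≤ R_{W,τ} · Id holds, where R_{W,τ} := 2τ e^{-τ/√P_W} / (√P_W (1 - e^{-2τ/√P_W})) ∈ (0,1). -/
open MeasureTheory Real RealInnerProductSpace

section AuxLemmas


lemma form_lower_bound {H : Type*} [NormedAddCommGroup H] [InnerProductSpace ℝ H]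
    [CompleteSpace H] (T : H →L[ℝ] H) (hT : IsSelfAdjoint T) {c : ℝ}
    (hs : spectrum ℝ T ⊆ Set.Ici c) (x : H) : c * ‖x‖ ^ 2 ≤ ⟪x, T x⟫ := by
  rcases eq_or_ne x 0 with rfl | hx
  · simp
  have hsymm := (ContinuousLinearMap.isSelfAdjoint_iff_isSymmetric.mp hT)
  have hTsymm : ∀ v w : H, ⟪T v, w⟫ = ⟪v, T w⟫ := fun v w => hsymm v w
  set S : Set ℝ := (fun y : H => ⟪y, T y⟫) '' {y | ‖y‖ = 1} with hS
  have hunit : ‖(‖x‖⁻¹ • x)‖ = 1 := by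
    simp [norm_smul, inv_mul_cancel₀ (norm_ne_zero_iff.mpr hx)]
  have hne : S.Nonempty := ⟨_, ⟨‖x‖⁻¹ • x, hunit, rfl⟩⟩
  have hbdd : BddBelow S := by
    refine ⟨-‖T‖, fun r ⟨y, hy, hry⟩ => ?_⟩
    have h1 : |⟪y, T y⟫| ≤ ‖y‖ * ‖T y‖ := abs_real_inner_le_norm _ _
    have h2 : ‖T y‖ ≤ ‖T‖ * ‖y‖ := T.le_opNorm y
    have : |⟪y, T y⟫| ≤ ‖T‖ := by
      calc |⟪y, T y⟫| ≤ ‖y‖ * ‖T y‖ := h1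
        _ ≤ ‖y‖ * (‖T‖ * ‖y‖) := by
            exact mul_le_mul_of_nonneg_left h2 (norm_nonneg _)
        _ = ‖T‖ := by rw [Set.mem_setOf_eq] at hy; rw [hy]; ring
    rw [← hry]
    linarith [neg_abs_le (⟪y, T y⟫)]
  set m := sInf S with hm
  have hmle : ∀ y : H, ‖y‖ = 1 → m ≤ ⟪y, T y⟫ := fun y hy =>
    csInf_le hbdd ⟨y, hy, rfl⟩
  have hform : ∀ y : H, m * ‖y‖ ^ 2 ≤ ⟪y, T y⟫ := by
    intro y
    rcases eq_or_ne y 0 with rfl | hy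
    · simp
    have hny : ‖y‖ ≠ 0 := norm_ne_zero_iff.mpr hy
    have hu : ‖(‖y‖⁻¹ • y)‖ = 1 := by simp [norm_smul, inv_mul_cancel₀ hny]
    have hle := hmle _ hu
    have hinner : ⟪(‖y‖⁻¹ • y), T (‖y‖⁻¹ • y)⟫ = ‖y‖⁻¹ * ‖y‖⁻¹ * ⟪y, T y⟫ := by
      rw [T.map_smul, real_inner_smul_left, real_inner_smul_right]; ring
    rw [hinner] at hle
    have hone : ‖y‖⁻¹ * ‖y‖⁻¹ * ‖y‖ ^ 2 = 1 := by rw [pow_two]; field_simp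
    have hIy : (‖y‖⁻¹ * ‖y‖⁻¹ * ⟪y, T y⟫) * ‖y‖ ^ 2 = ⟪y, T y⟫ := by
      have hr : ‖y‖⁻¹ * ‖y‖⁻¹ * ⟪y, T y⟫ * ‖y‖ ^ 2
          = (‖y‖⁻¹ * ‖y‖⁻¹ * ‖y‖ ^ 2) * ⟪y, T y⟫ := by ring
      rw [hr, hone, one_mul]
    linarith [mul_le_mul_of_nonneg_right hle (sq_nonneg ‖y‖), hIy]
  set B : H →L[ℝ] H := T - m • 1 with hB
  have hBapp : ∀ y : H, B y = T y - m • y := by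
    intro y; simp [hB, ContinuousLinearMap.sub_apply, ContinuousLinearMap.smul_apply,
      ContinuousLinearMap.one_apply]
  have hBpos : ∀ y : H, 0 ≤ ⟪y, B y⟫ := by
    intro y
    rw [hBapp, inner_sub_right, real_inner_smul_right, real_inner_self_eq_norm_sq]
    linarith [hform y]
  have hBsymm : ∀ v w : H, ⟪B v, w⟫ = ⟪v, B w⟫ := by
    intro v w
    rw [hBapp, hBapp, inner_sub_left, inner_sub_right, hTsymm v w,
      real_inner_smul_left, real_inner_smul_right]
  have hCS : ∀ y : H, ‖B y‖ ^ 2 ≤ ‖B‖ * ⟪y, B y⟫ := by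
    intro y
    rcases eq_or_ne (B y) 0 with h0 | h0
    · rw [h0]
      simpa using mul_nonneg (norm_nonneg B) (hBpos y)
    have hq : ∀ t : ℝ, 0 ≤ ⟪B y, B (B y)⟫ * (t * t) + (2 * ‖B y‖ ^ 2) * t + ⟪y, B y⟫ := by
      intro t
      have hp := hBpos (y + t • B y)
      have hexp : ⟪y + t • B y, B (y + t • B y)⟫ =
          ⟪B y, B (B y)⟫ * (t * t) + (2 * ‖B y‖ ^ 2) * t + ⟪y, B y⟫ := by
        rw [map_add, B.map_smul, inner_add_left, inner_add_right, inner_add_right,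
          real_inner_smul_left, real_inner_smul_right, real_inner_smul_left,
          real_inner_smul_right]
        have h1 : ⟪y, B (B y)⟫ = ‖B y‖ ^ 2 := by
          rw [← hBsymm, real_inner_self_eq_norm_sq]
        rw [h1, real_inner_self_eq_norm_sq]
        ring
      rw [hexp] at hp; exact hp
    have hdisc := discrim_le_zero hq
    rw [discrim] at hdisc
    have h1 : ⟪B y, B (B y)⟫ ≤ ‖B‖ * ‖B y‖ ^ 2 := by
      calc ⟪B y, B (B y)⟫ ≤ ‖B y‖ * ‖B (B y)‖ := real_inner_le_norm _ _
        _ ≤ ‖B y‖ * (‖B‖ * ‖B y‖) := mul_le_mul_of_nonneg_left (B.le_opNorm _) (norm_nonneg _)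
        _ = ‖B‖ * ‖B y‖ ^ 2 := by ring
    have h2 : (‖B y‖ ^ 2) ^ 2 ≤ ⟪B y, B (B y)⟫ * ⟪y, B y⟫ := by nlinarith
    have h3 : ⟪B y, B (B y)⟫ * ⟪y, B y⟫ ≤ (‖B‖ * ‖B y‖ ^ 2) * ⟪y, B y⟫ :=
      mul_le_mul_of_nonneg_right h1 (hBpos y)
    have hBy : (0:ℝ) < ‖B y‖ ^ 2 := pow_pos (norm_pos_iff.mpr h0) 2
    nlinarith
  have hmspec : m ∈ spectrum ℝ T := by
    by_contra hnot
    have hu : IsUnit ((algebraMap ℝ (H →L[ℝ] H)) m - T) := spectrum.notMem_iff.mp hnot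
    have hu' : IsUnit B := by
      have : B = -((algebraMap ℝ (H →L[ℝ] H)) m - T) := by
        rw [Algebra.algebraMap_eq_smul_one, hB]; abel
      rw [this]; exact hu.neg
    obtain ⟨u, hudef⟩ := hu'
    set K := ‖((↑u⁻¹ : H →L[ℝ] H))‖ with hK
    have hbound : ∀ y : H, ‖y‖ = 1 → 1 ≤ (K ^ 2 * ‖B‖) * (⟪y, T y⟫ - m) := by
      intro y hy
      have hy1 : (↑u⁻¹ : H →L[ℝ] H) (B y) = y := by
        have h := congrArg (fun (A : H →L[ℝ] H) => A y) u.inv_mul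
        simpa [ContinuousLinearMap.mul_apply, ContinuousLinearMap.one_apply, hudef] using h
      have h1 : (1:ℝ) ≤ K * ‖B y‖ := by
        calc (1:ℝ) = ‖y‖ := hy.symm
          _ = ‖(↑u⁻¹ : H →L[ℝ] H) (B y)‖ := by rw [hy1]
          _ ≤ K * ‖B y‖ := ContinuousLinearMap.le_opNorm _ _
      have h2 : (1:ℝ) ≤ K ^ 2 * ‖B y‖ ^ 2 := by nlinarith
      have h3 := hCS y
      have h4 : ⟪y, B y⟫ = ⟪y, T y⟫ - m := by
        rw [hBapp, inner_sub_right, real_inner_smul_right, real_inner_self_eq_norm_sq, hy]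
        ring
      have hK0 : (0:ℝ) ≤ K ^ 2 := by positivity
      rw [h4] at h3
      linarith [mul_le_mul_of_nonneg_left h3 hK0, h2]
    have hP : 0 < K ^ 2 * ‖B‖ := by
      obtain ⟨r, ⟨y, hy, hry⟩⟩ := hne
      have hb := hbound y hy
      by_contra hle
      push_neg at hle
      have hP0 : K ^ 2 * ‖B‖ = 0 := le_antisymm hle (by positivity)
      rw [hP0, zero_mul] at hb; linarith
    have hall : ∀ r ∈ S, m + (K ^ 2 * ‖B‖)⁻¹ ≤ r := by
      rintro r ⟨y, hy, rfl⟩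
      have hb := hbound y hy
      have h5 : (K ^ 2 * ‖B‖)⁻¹ ≤ ⟪y, T y⟫ - m := by
        rw [inv_le_iff_one_le_mul₀ hP]
        linarith
      simp only []
      linarith
    have hcontr : m + (K ^ 2 * ‖B‖)⁻¹ ≤ m := le_csInf hne hall
    have : (0:ℝ) < (K ^ 2 * ‖B‖)⁻¹ := by positivity
    linarith
  have hcm : c ≤ m := hs hmspec
  calc c * ‖x‖ ^ 2 ≤ m * ‖x‖ ^ 2 := by nlinarith [sq_nonneg ‖x‖, norm_nonneg x]
    _ ≤ ⟪x, T x⟫ := hform x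

lemma summable_odd_exp {A : Type*} [NormedRing A] [NormedAlgebra ℝ A] [CompleteSpace A] (u : A) :
    Summable (fun k : ℕ => (((2*k+1).factorial : ℝ))⁻¹ • u ^ (2*k+1)) := by
  have h := NormedSpace.expSeries_summable' (𝕂 := ℝ) u
  exact h.comp_injective (fun a b hab => by omega)

lemma exp_sub_exp_neg {A : Type*} [NormedRing A] [NormedAlgebra ℝ A] [CompleteSpace A] (u : A) :
    NormedSpace.exp u - NormedSpace.exp (-u)
      = ∑' k : ℕ, ((2:ℝ) * (((2*k+1).factorial : ℝ))⁻¹) • u ^ (2*k+1) := by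
  have hs1 : Summable (fun n : ℕ => ((n.factorial : ℝ))⁻¹ • u ^ n) :=
    NormedSpace.expSeries_summable' (𝕂 := ℝ) u
  have hs2 : Summable (fun n : ℕ => ((n.factorial : ℝ))⁻¹ • (-u) ^ n) :=
    NormedSpace.expSeries_summable' (𝕂 := ℝ) (-u)
  set f : ℕ → A := fun n => ((n.factorial : ℝ))⁻¹ • u ^ n - ((n.factorial : ℝ))⁻¹ • (-u) ^ n
    with hf
  have hfs : Summable f := hs1.sub hs2
  have heven : ∀ k : ℕ, f (2*k) = 0 := by
    intro k
    simp only [hf, Even.neg_pow (even_two_mul k), sub_self]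
  have hodd : ∀ k : ℕ, f (2*k+1) = ((2:ℝ) * (((2*k+1).factorial : ℝ))⁻¹) • u ^ (2*k+1) := by
    intro k
    have : Odd (2*k+1) := ⟨k, rfl⟩
    simp only [hf, Odd.neg_pow this, smul_neg, sub_neg_eq_add, ← two_smul ℝ, smul_smul]
  have he : Summable (fun k : ℕ => f (2*k)) := hfs.comp_injective (fun a b hab => by omega)
  have ho : Summable (fun k : ℕ => f (2*k+1)) := hfs.comp_injective (fun a b hab => by omega)
  have hsplit := tsum_even_add_odd he ho
  have hzero : ∑' k : ℕ, f (2*k) = 0 := by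
    have : (fun k : ℕ => f (2*k)) = fun _ => 0 := funext heven
    rw [this, tsum_zero]
  calc NormedSpace.exp u - NormedSpace.exp (-u)
      = ∑' n : ℕ, f n := by
        rw [NormedSpace.exp_eq_tsum ℝ]
        exact (Summable.tsum_sub hs1 hs2).symm
    _ = ∑' k : ℕ, f (2*k) + ∑' k : ℕ, f (2*k+1) := hsplit.symm
    _ = ∑' k : ℕ, ((2:ℝ) * (((2*k+1).factorial : ℝ))⁻¹) • u ^ (2*k+1) := by
        rw [hzero, zero_add]
        exact tsum_congr hodd

end AuxLemmas

set_option maxHeartbeats 1000000 in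
set_option synthInstance.maxHeartbeats 400000 in
/-- Operator inequality `2τ L e^{-τL} (1 - e^{-2τL})⁻¹ ≤ R_{W,τ} Id` for a self-adjoint
operator with spectrum in `[1/√P_W, ∞)`. -/
theorem stmt3
    {H : Type*} [NormedAddCommGroup H] [InnerProductSpace ℝ H] [CompleteSpace H]
    (L : H →L[ℝ] H) (hsa : IsSelfAdjoint L)
    (P_W τ : ℝ) (hPW : 0 < P_W) (hτ : 0 < τ)
    (hspec : spectrum ℝ L ⊆ Set.Ici (1 / Real.sqrt P_W))
    (Minv : H →L[ℝ] H)
    (hMinv₁ : Minv.comp (ContinuousLinearMap.id ℝ H - NormedSpace.exp (-((2 * τ) • L)))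
      = ContinuousLinearMap.id ℝ H)
    (hMinv₂ : (ContinuousLinearMap.id ℝ H - NormedSpace.exp (-((2 * τ) • L))).comp Minv
      = ContinuousLinearMap.id ℝ H) :
    let R : ℝ := 2 * τ * Real.exp (-(τ / Real.sqrt P_W)) /
      (Real.sqrt P_W * (1 - Real.exp (-(2 * τ / Real.sqrt P_W))))
    (R ∈ Set.Ioo (0:ℝ) 1) ∧
    ∀ f : H, ⟪f, ((2 * τ) • (L.comp ((NormedSpace.exp (-(τ • L))).comp Minv))) f⟫
      ≤ R * ‖f‖ ^ 2 := by
  intro R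
  set p : ℝ := Real.sqrt P_W with hpdef
  have hp : 0 < p := Real.sqrt_pos.mpr hPW
  set c : ℝ := 1 / p with hcdef
  have hc : 0 < c := by positivity
  set a : ℝ := τ / p with hadef
  have ha : 0 < a := by positivity
  have hac : τ * c = a := by rw [hcdef, hadef]; ring
  -- scalar series s₀ = sinh a / a
  set s₀ : ℝ := ∑' k : ℕ, a ^ (2*k) * (((2*k+1).factorial : ℝ))⁻¹ with hs₀def
  have hs₀sum : Summable (fun k : ℕ => a ^ (2*k) * (((2*k+1).factorial : ℝ))⁻¹) := by
    refine Summable.of_nonneg_of_le (fun k => by positivity) (fun k => ?_)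
      ((Real.summable_pow_div_factorial a).comp_injective
        (fun (x y : ℕ) (hxy : 2*x = 2*y) => by omega))
    show a ^ (2*k) * (((2*k+1).factorial : ℝ))⁻¹ ≤ a ^ (2*k) / ((2*k).factorial : ℝ)
    rw [div_eq_mul_inv]
    apply mul_le_mul_of_nonneg_left _ (by positivity)
    rw [inv_le_inv₀ (by positivity) (by positivity)]
    exact_mod_cast Nat.factorial_le (by omega)
  -- operator series C
  set ck : ℕ → ℝ := fun k => τ ^ (2*k) * (((2*k+1).factorial : ℝ))⁻¹ with hckdef
  have hck0 : ∀ k, 0 ≤ ck k := fun k => by positivity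
  have hnormpow : ∀ n : ℕ, ‖L ^ n‖ ≤ ‖L‖ ^ n := by
    intro n
    induction n with
    | zero => simpa [pow_zero, ContinuousLinearMap.one_def] using ContinuousLinearMap.norm_id_le
    | succ n ih =>
      calc ‖L ^ (n+1)‖ = ‖L ^ n * L‖ := by rw [pow_succ]
        _ ≤ ‖L ^ n‖ * ‖L‖ := norm_mul_le _ _
        _ ≤ ‖L‖ ^ n * ‖L‖ := mul_le_mul_of_nonneg_right ih (norm_nonneg _)
        _ = ‖L‖ ^ (n+1) := by rw [pow_succ]
  have hCsum : Summable (fun k : ℕ => ck k • L ^ (2*k)) := by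
    apply Summable.of_norm_bounded (g := fun k : ℕ => (τ * ‖L‖) ^ (2*k) / ((2*k).factorial : ℝ))
    · exact (Real.summable_pow_div_factorial (τ * ‖L‖)).comp_injective
        (fun (x y : ℕ) (hxy : 2*x = 2*y) => by omega)
    · intro k
      rw [norm_smul (ck k) (L ^ (2*k)), Real.norm_eq_abs, abs_of_nonneg (hck0 k)]
      calc ck k * ‖L ^ (2*k)‖ ≤ ck k * ‖L‖ ^ (2*k) :=
            mul_le_mul_of_nonneg_left (hnormpow _) (hck0 k)
        _ ≤ (τ ^ (2*k) * (((2*k).factorial : ℝ))⁻¹) * ‖L‖ ^ (2*k) := by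
            apply mul_le_mul_of_nonneg_right _ (by positivity)
            apply mul_le_mul_of_nonneg_left _ (by positivity)
            rw [inv_le_inv₀ (by positivity) (by positivity)]
            exact_mod_cast Nat.factorial_le (by omega)
        _ = (τ * ‖L‖) ^ (2*k) / ((2*k).factorial : ℝ) := by
            rw [mul_pow]; ring
  set C : H →L[ℝ] H := ∑' k : ℕ, ck k • L ^ (2*k) with hCdef
  set E : H →L[ℝ] H := NormedSpace.exp (-(τ • L)) with hEdef
  -- odd-power series D
  set D : ℕ → H →L[ℝ] H := fun k => ck k • L ^ (2*k+1) with hDdef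
  have hDeq : ∀ k, L * (ck k • L ^ (2*k)) = D k := by
    intro k; rw [mul_smul_comm, ← pow_succ']
  have hDsum : Summable D := by
    have h := hCsum.mul_left L
    simpa only [hDeq] using h
  have hLC : L * C = ∑' k, D k := by
    rw [hCdef, ← Summable.tsum_mul_left L hCsum]
    exact tsum_congr hDeq
  have hCL : C * L = ∑' k, D k := by
    rw [hCdef, ← Summable.tsum_mul_right L hCsum]
    refine tsum_congr (fun k => ?_)
    rw [smul_mul_assoc, ← pow_succ]
  have hcommCL : L * C = C * L := by rw [hLC, hCL]
  -- key identity exp(τL) - exp(-τL) = 2τ L C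
  have hkey : NormedSpace.exp (τ • L) - E = (2*τ) • (L * C) := by
    rw [hEdef, exp_sub_exp_neg (τ • L), hLC,
      ← (hDsum.hasSum.const_smul ((2:ℝ)*τ)).tsum_eq]
    refine tsum_congr (fun k => ?_)
    rw [hDdef, smul_pow, smul_smul, smul_smul]
    congr 1
    rw [hckdef]
    simp only []
    rw [pow_succ]
    ring
  have hcomτL : Commute L (-(τ • L)) := (((Commute.refl L).smul_right τ)).neg_right
  have hcomLE : Commute L E := hcomτL.exp_right
  have hEexp : E * NormedSpace.exp (τ • L) = 1 := by
    rw [hEdef, ← NormedSpace.exp_add_of_commute_of_mem_ball (𝕂 := ℝ) ((Commute.refl (τ • L)).neg_left)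
      ((NormedSpace.expSeries_radius_eq_top ℝ (H →L[ℝ] H)).symm ▸ edist_lt_top _ _) ((NormedSpace.expSeries_radius_eq_top ℝ (H →L[ℝ] H)).symm ▸ edist_lt_top _ _)]
    rw [neg_add_cancel, NormedSpace.exp_zero]
  have hEE : E * E = NormedSpace.exp (-((2 * τ) • L)) := by
    rw [hEdef, ← NormedSpace.exp_add_of_commute_of_mem_ball (𝕂 := ℝ) ((Commute.refl (-(τ • L))))
      ((NormedSpace.expSeries_radius_eq_top ℝ (H →L[ℝ] H)).symm ▸ edist_lt_top _ _) ((NormedSpace.expSeries_radius_eq_top ℝ (H →L[ℝ] H)).symm ▸ edist_lt_top _ _)]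
    congr 1
    rw [two_mul, add_smul]
    abel
  have hid : (1 : H →L[ℝ] H) - NormedSpace.exp (-((2 * τ) • L)) = (2*τ) • (E * (L * C)) := by
    rw [← hEexp, ← hEE, ← mul_sub, hkey, mul_smul_comm]
  -- commute E past L*C
  have hELC : E * (L * C) = C * (L * E) := by
    have h1 : E * (L * C) = (L * C) * E := by
      rw [hLC, ← Summable.tsum_mul_left E hDsum, ← Summable.tsum_mul_right E hDsum]
      refine tsum_congr (fun k => ?_)
      rw [hDdef]
      simp only []
      rw [mul_smul_comm, smul_mul_assoc]
      congr 1
      exact (hcomLE.symm.pow_right (2*k+1)).eq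
    rw [h1, hcommCL, mul_assoc]
  -- symmetry facts
  have hTsymm : ∀ v w : H, ⟪L v, w⟫ = ⟪v, L w⟫ := fun v w =>
    (ContinuousLinearMap.isSelfAdjoint_iff_isSymmetric.mp hsa) v w
  have hsympow : ∀ (n : ℕ) (v w : H), ⟪(L ^ n) v, w⟫ = ⟪v, (L ^ n) w⟫ := by
    intro n
    induction n with
    | zero => intro v w; simp [ContinuousLinearMap.one_def]
    | succ n ih =>
      intro v w
      have e1 : ∀ z : H, (L ^ (n+1)) z = (L ^ n) (L z) := by
        intro z; rw [pow_succ, ContinuousLinearMap.mul_apply]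
      have e2 : L ((L ^ n) w) = (L ^ n) (L w) := by
        rw [← ContinuousLinearMap.mul_apply, ← ContinuousLinearMap.mul_apply,
          ((Commute.refl L).pow_right n).eq]
      rw [e1, e1, ih (L v) w, hTsymm v ((L ^ n) w), e2]
  -- lower bound for powers
  have hlow : ∀ w : H, c * ‖w‖ ≤ ‖L w‖ := by
    intro w
    rcases eq_or_ne w 0 with rfl | hw
    · simp
    have h1 := form_lower_bound L hsa hspec w
    have h2 : ⟪w, L w⟫ ≤ ‖w‖ * ‖L w‖ := real_inner_le_norm _ _
    have hnw : 0 < ‖w‖ := norm_pos_iff.mpr hw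
    have : c * ‖w‖ * ‖w‖ ≤ ‖L w‖ * ‖w‖ := by nlinarith
    exact le_of_mul_le_mul_right (by linarith [this]) hnw
  have hlowk : ∀ (k : ℕ) (w : H), c ^ k * ‖w‖ ≤ ‖(L ^ k) w‖ := by
    intro k
    induction k with
    | zero => intro w; simp [ContinuousLinearMap.one_def]
    | succ k ih =>
      intro w
      have e1 : (L ^ (k+1)) w = L ((L ^ k) w) := by
        rw [pow_succ', ContinuousLinearMap.mul_apply]
      calc c ^ (k+1) * ‖w‖ = c * (c ^ k * ‖w‖) := by ring
        _ ≤ c * ‖(L ^ k) w‖ := mul_le_mul_of_nonneg_left (ih w) hc.le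
        _ ≤ ‖L ((L ^ k) w)‖ := hlow _
        _ = ‖(L ^ (k+1)) w‖ := by rw [e1]
  -- quadratic form lower bound for C
  have hCform : ∀ v : H, s₀ * ‖v‖ ^ 2 ≤ ⟪v, C v⟫ := by
    intro v
    have hCv : HasSum (fun k : ℕ => (ck k • L ^ (2*k)) v) (C v) := by
      have h := (ContinuousLinearMap.apply ℝ H v).hasSum hCsum.hasSum
      simpa only [ContinuousLinearMap.apply_apply] using h
    have hinner : HasSum (fun k : ℕ => ⟪v, (ck k • L ^ (2*k)) v⟫) ⟪v, C v⟫ := by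
      have := (innerSL ℝ v).hasSum hCv
      exact this
    have hterm : ∀ k : ℕ, a ^ (2*k) * (((2*k+1).factorial : ℝ))⁻¹ * ‖v‖ ^ 2
        ≤ ⟪v, (ck k • L ^ (2*k)) v⟫ := by
      intro k
      have h1 : ⟪v, (ck k • L ^ (2*k)) v⟫ = ck k * ⟪v, (L ^ (2*k)) v⟫ := by
        rw [ContinuousLinearMap.smul_apply, real_inner_smul_right]
      have h2 : ⟪v, (L ^ (2*k)) v⟫ = ‖(L ^ k) v‖ ^ 2 := by
        have e1 : (L ^ (2*k)) v = (L ^ k) ((L ^ k) v) := by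
          rw [two_mul, pow_add, ContinuousLinearMap.mul_apply]
        rw [e1, ← hsympow k v ((L ^ k) v), real_inner_self_eq_norm_sq]
      have h3 : c ^ k * ‖v‖ ≤ ‖(L ^ k) v‖ := hlowk k v
      have h4 : (c ^ k * ‖v‖) ^ 2 ≤ ‖(L ^ k) v‖ ^ 2 := by
        apply pow_le_pow_left₀ (by positivity) h3 2
      have h5 : a ^ (2*k) * ‖v‖ ^ 2 = τ ^ (2*k) * ((c ^ k * ‖v‖) ^ 2) := by
        rw [← hac]
        ring
      rw [h1, h2]
      calc a ^ (2*k) * (((2*k+1).factorial : ℝ))⁻¹ * ‖v‖ ^ 2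
          = (((2*k+1).factorial : ℝ))⁻¹ * (a ^ (2*k) * ‖v‖ ^ 2) := by ring
        _ = (((2*k+1).factorial : ℝ))⁻¹ * (τ ^ (2*k) * ((c ^ k * ‖v‖) ^ 2)) := by rw [h5]
        _ ≤ (((2*k+1).factorial : ℝ))⁻¹ * (τ ^ (2*k) * ‖(L ^ k) v‖ ^ 2) := by
            apply mul_le_mul_of_nonneg_left _ (by positivity)
            exact mul_le_mul_of_nonneg_left h4 (by positivity)
        _ = ck k * ‖(L ^ k) v‖ ^ 2 := by rw [hckdef]; ring
    have hscal : HasSum (fun k : ℕ => a ^ (2*k) * (((2*k+1).factorial : ℝ))⁻¹ * ‖v‖ ^ 2)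
        (s₀ * ‖v‖ ^ 2) := hs₀sum.hasSum.mul_right _
    exact hasSum_le hterm hscal hinner
  -- scalar sinh-type identity : exp a - exp (-a) = 2 a s₀, hence R * s₀ = 1 and 1 < s₀
  have hsinh : Real.exp a - Real.exp (-a) = 2 * a * s₀ := by
    have h1 : NormedSpace.exp a - NormedSpace.exp (-a)
        = ∑' k : ℕ, ((2:ℝ) * (((2*k+1).factorial : ℝ))⁻¹) • a ^ (2*k+1) :=
      exp_sub_exp_neg (A := ℝ) a
    rw [Real.exp_eq_exp_ℝ, h1, hs₀def, ← Summable.tsum_mul_left (2*a) hs₀sum]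
    refine tsum_congr (fun k => ?_)
    rw [smul_eq_mul, pow_succ]
    ring
  have hs₀gt : 1 < s₀ := by
    have := Real.self_lt_sinh_iff.mpr ha
    rw [Real.sinh_eq] at this
    nlinarith [hsinh]
  have hs₀pos : 0 < s₀ := by linarith
  -- q = exp(-a)
  set q : ℝ := Real.exp (-(τ / p)) with hqdef
  have hq : 0 < q := Real.exp_pos _
  have hq1 : q < 1 := Real.exp_lt_one_iff.mpr (neg_lt_zero.mpr (div_pos hτ hp))
  have hq2 : Real.exp (-(2 * τ / p)) = q * q := by
    rw [hqdef, ← Real.exp_add]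
    congr 1
    ring
  have hexpa : Real.exp a = q⁻¹ := by
    rw [hqdef, hadef, ← Real.exp_neg, neg_neg]
  have hexpna : Real.exp (-a) = q := by rw [hqdef, hadef]
  have hRs : R * s₀ = 1 := by
    have hs' : 2 * a * s₀ * q = 1 - q * q := by
      have h : (Real.exp a - Real.exp (-a)) * q = (2 * a * s₀) * q := by rw [hsinh]
      rw [sub_mul, hexpa, hexpna, inv_mul_cancel₀ hq.ne'] at h
      linarith
    have hτ : τ = a * p := by rw [hadef]; field_simp
    have hden : p * (1 - q * q) ≠ 0 := by
      have : 0 < 1 - q * q := by nlinarith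
      positivity
    have hR : R = 2 * τ * Real.exp (-(τ / p)) / (p * (1 - Real.exp (-(2 * τ / p)))) := rfl
    rw [hq2, ← hqdef] at hR
    rw [hR, div_mul_eq_mul_div, div_eq_one_iff_eq hden, ← hs', hτ]
    ring
  have hR0 : 0 < R := by nlinarith
  have hR1 : R < 1 := by nlinarith
  refine ⟨⟨hR0, hR1⟩, ?_⟩
  -- main inequality
  intro f
  set g : H := Minv f with hgdef
  set h : H := L (E g) with hhdef
  have hMf : g - (NormedSpace.exp (-((2 * τ) • L))) g = f := by
    have hh := congrArg (fun (T : H →L[ℝ] H) => T f) hMinv₂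
    simpa only [ContinuousLinearMap.comp_apply, ContinuousLinearMap.sub_apply,
      ContinuousLinearMap.id_apply] using hh
  have hid' : (ContinuousLinearMap.id ℝ H - NormedSpace.exp (-((2 * τ) • L)))
      = (2*τ) • (C * (L * E)) := by
    rw [← ContinuousLinearMap.one_def, hid, hELC]
  have hf : f = (2*τ) • (C h) := by
    have h1 : (ContinuousLinearMap.id ℝ H - NormedSpace.exp (-((2 * τ) • L))) g = f := by
      rw [ContinuousLinearMap.sub_apply, ContinuousLinearMap.id_apply]
      exact hMf
    rw [hid'] at h1
    rw [← h1, ContinuousLinearMap.smul_apply, ContinuousLinearMap.mul_apply,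
      ContinuousLinearMap.mul_apply]
  have hAf : ((2 * τ) • (L.comp ((NormedSpace.exp (-(τ • L))).comp Minv))) f
      = (2*τ) • h := by
    rw [ContinuousLinearMap.smul_apply, ContinuousLinearMap.comp_apply,
      ContinuousLinearMap.comp_apply]
  rw [hAf]
  rcases eq_or_ne h 0 with h0 | h0
  · have hf0 : f = 0 := by rw [hf, h0, map_zero, smul_zero]
    rw [hf0, h0]
    simp
  · have hkey2 : ⟪C h, h⟫ ≤ R * ‖C h‖ ^ 2 := by
      have hb1 : s₀ * ‖h‖ ^ 2 ≤ ⟪h, C h⟫ := hCform h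
      have hb2 : ⟪h, C h⟫ ≤ ‖h‖ * ‖C h‖ := real_inner_le_norm _ _
      have hnh : 0 < ‖h‖ := norm_pos_iff.mpr h0
      have hb3 : s₀ * ‖h‖ ≤ ‖C h‖ := by
        have : s₀ * ‖h‖ * ‖h‖ ≤ ‖C h‖ * ‖h‖ := by nlinarith
        exact le_of_mul_le_mul_right this hnh
      have hb4 : ‖h‖ ≤ R * ‖C h‖ := by nlinarith
      calc ⟪C h, h⟫ = ⟪h, C h⟫ := real_inner_comm _ _
        _ ≤ ‖h‖ * ‖C h‖ := hb2
        _ ≤ (R * ‖C h‖) * ‖C h‖ := mul_le_mul_of_nonneg_right hb4 (norm_nonneg _)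
        _ = R * ‖C h‖ ^ 2 := by ring
    have hnf : ‖f‖ ^ 2 = (2*τ)^2 * ‖C h‖ ^ 2 := by
      rw [hf, norm_smul, Real.norm_eq_abs, abs_of_pos (by positivity), mul_pow]
    have hif : ⟪f, (2*τ) • h⟫ = (2*τ)^2 * ⟪C h, h⟫ := by
      rw [hf, real_inner_smul_left, real_inner_smul_right]
      ring
    rw [hif, hnf]
    nlinarith [hkey2, sq_nonneg (2*τ)]
end

section
/- Almost-orthogonality of forward and backward semigroup modes: let L be self-adjoint with spectrum in [1/√P_W, ∞) on L²(μ_W), and let g_+, g_- ∈ L²(μ_W). Define u(t) = e^{-tL}g_+ + e^{-(τ-t)L}g_- for t ∈ [0,τ]. Then ∫₀^τ ‖u(t)‖² U_τ(dt) ≥ (1 - R_{W,τ}) ( ∫₀^τ ‖e^{-tL}g_+‖² U_τ(dt) + ∫₀^τ ‖e^{-(τ-t)L}g_-‖² U_τ(dt) ), where R_{W,τ} = 2τ e^{-τ/√P_W}/(√P_W(1-e^{-2τ/√P_W})). -/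
open MeasureTheory Real intervalIntegral
set_option synthInstance.maxHeartbeats 1000000
set_option maxHeartbeats 1000000

local notation "⟪" x ", " y "⟫" => @inner ℝ _ _ x y

section aux
variable {H : Type*} [NormedAddCommGroup H] [InnerProductSpace ℝ H] [CompleteSpace H]

/-- Generalized Cauchy-Schwarz for a positive symmetric operator. -/
lemma aux_cs (T : H →L[ℝ] H) (hT : IsSelfAdjoint T)
    (hpos : ∀ y : H, 0 ≤ ⟪T y, y⟫) (y : H) :
    ‖T y‖ ^ 2 ≤ ‖T‖ * ⟪T y, y⟫ := by
  have hq : ∀ t : ℝ, 0 ≤ ⟪T (T y), T y⟫ * (t * t) + (2 * ‖T y‖ ^ 2) * t + ⟪T y, y⟫ := by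
    intro t
    have h0 := hpos (y + t • T y)
    have hsym := hT.isSymmetric
    have h1 : ⟪T (y + t • T y), y + t • T y⟫
        = ⟪T y, y⟫ + t * ⟪T y, T y⟫ + t * ⟪T (T y), y⟫ + t * t * ⟪T (T y), T y⟫ := by
      simp only [ContinuousLinearMap.map_add, ContinuousLinearMap.map_smul,
        inner_add_add_self, inner_add_left, inner_add_right,
        real_inner_smul_left, real_inner_smul_right]
      ring
    have h2 : ⟪T (T y), y⟫ = ⟪T y, T y⟫ := by
      simpa using hsym (T y) y
    have h3 : ⟪T y, T y⟫ = ‖T y‖ ^ 2 := real_inner_self_eq_norm_sq _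
    rw [h1, h2, h3] at h0
    nlinarith [h0]
  have hd := discrim_le_zero hq
  have hub : ⟪T (T y), T y⟫ ≤ ‖T‖ * ‖T y‖ ^ 2 := by
    calc ⟪T (T y), T y⟫ ≤ ‖T (T y)‖ * ‖T y‖ := real_inner_le_norm _ _
    _ ≤ (‖T‖ * ‖T y‖) * ‖T y‖ := by
        gcongr; exact T.le_opNorm _
    _ = ‖T‖ * ‖T y‖ ^ 2 := by ring
  have hTnn : (0:ℝ) ≤ ‖T‖ := norm_nonneg _
  have hynn : (0:ℝ) ≤ ⟪T y, y⟫ := hpos y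
  rw [discrim] at hd
  -- hd : (2 * ‖T y‖^2)^2 - 4 * ⟪T (T y), T y⟫ * ⟪T y, y⟫ ≤ 0
  have hb : ‖T y‖ ^ 2 * ‖T y‖ ^ 2 ≤ (‖T‖ * ⟪T y, y⟫) * ‖T y‖ ^ 2 := by
    nlinarith [hd, hub, hynn]
  rcases eq_or_lt_of_le (sq_nonneg ‖T y‖) with h | h
  · rw [← h]; positivity
  · exact le_of_mul_le_mul_right hb h

/-- Coercivity from the spectrum. -/
lemma aux_coercive (L : H →L[ℝ] H) (hsa : IsSelfAdjoint L) {m : ℝ}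
    (hspec : spectrum ℝ L ⊆ Set.Ici m) (x : H) :
    m * ‖x‖ ^ 2 ≤ ⟪L x, x⟫ := by
  have key : ∀ u : H, ‖u‖ = 1 → m ≤ ⟪L u, u⟫ := by
    intro u hu
    by_contra hcon
    push_neg at hcon
    -- the set of Rayleigh quotients over the unit sphere
    set S : Set ℝ := {r | ∃ v : H, ‖v‖ = 1 ∧ ⟪L v, v⟫ = r} with hS
    have hSne : S.Nonempty := ⟨⟪L u, u⟫, u, hu, rfl⟩
    have hSbd : BddBelow S := by
      refine ⟨-‖L‖, ?_⟩
      rintro r ⟨v, hv, rfl⟩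
      have := abs_real_inner_le_norm (L v) v
      have h2 : ‖L v‖ ≤ ‖L‖ := by simpa [hv] using L.le_opNorm v
      have h3 : ‖L v‖ * ‖v‖ ≤ ‖L‖ := by simpa [hv] using h2
      have h4 := neg_abs_le (⟪L v, v⟫ : ℝ)
      linarith
    set β : ℝ := sInf S with hβ
    have hβm : β < m := lt_of_le_of_lt (csInf_le hSbd ⟨u, hu, rfl⟩) hcon
    have hβspec : β ∉ spectrum ℝ L := fun hmem => absurd (hspec hmem) (not_le.2 hβm)
    have hunit : IsUnit ((algebraMap ℝ (H →L[ℝ] H)) β - L) := spectrum.notMem_iff.mp hβspec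
    obtain ⟨U, hU⟩ := hunit
    set C : H →L[ℝ] H := ↑U⁻¹ with hC
    have hCinv : ∀ y : H, C (((algebraMap ℝ (H →L[ℝ] H)) β - L) y) = y := by
      intro y
      have h1 : ((↑U⁻¹ : H →L[ℝ] H) * ↑U) y = (1 : H →L[ℝ] H) y := by rw [U.inv_mul]
      rw [hU] at h1
      simpa [hC] using h1
    set T : H →L[ℝ] H := L - (algebraMap ℝ (H →L[ℝ] H)) β with hT
    have hTy : ∀ y : H, T y = L y - β • y := by
      intro y; simp [hT, Algebra.algebraMap_eq_smul_one]
    have hlow : ∀ y : H, ‖y‖ ≤ ‖C‖ * ‖T y‖ := by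
      intro y
      have h1 : ‖y‖ = ‖C (((algebraMap ℝ (H →L[ℝ] H)) β - L) y)‖ := by rw [hCinv]
      have h2 : ((algebraMap ℝ (H →L[ℝ] H)) β - L) y = -(T y) := by
        simp [hT]
      calc ‖y‖ = ‖C (((algebraMap ℝ (H →L[ℝ] H)) β - L) y)‖ := h1
      _ ≤ ‖C‖ * ‖((algebraMap ℝ (H →L[ℝ] H)) β - L) y‖ := C.le_opNorm _
      _ = ‖C‖ * ‖T y‖ := by rw [h2, norm_neg]
    have hTsa : IsSelfAdjoint T := by
      refine hsa.sub ?_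
      rw [Algebra.algebraMap_eq_smul_one]
      exact (IsSelfAdjoint.all β).smul (IsSelfAdjoint.one _)
    have hTpos : ∀ y : H, 0 ≤ ⟪T y, y⟫ := by
      intro y
      rcases eq_or_ne y 0 with rfl | hy
      · simp
      · have hny : ‖y‖ ≠ 0 := norm_ne_zero_iff.mpr hy
        set v : H := ‖y‖⁻¹ • y with hv
        have hvn : ‖v‖ = 1 := by
          rw [hv, norm_smul]; simp [abs_of_nonneg (inv_nonneg.2 (norm_nonneg y)), hny]
        have hβle : β ≤ ⟪L v, v⟫ := csInf_le hSbd ⟨v, hvn, rfl⟩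
        have hsc : ⟪L v, v⟫ = ‖y‖⁻¹ ^ 2 * ⟪L y, y⟫ := by
          rw [hv, ContinuousLinearMap.map_smul, real_inner_smul_left, real_inner_smul_right]
          ring
        have hyy : ⟪y, y⟫ = ‖y‖ ^ 2 := real_inner_self_eq_norm_sq _
        have hexp : ⟪T y, y⟫ = ⟪L y, y⟫ - β * ‖y‖ ^ 2 := by
          rw [hTy, inner_sub_left, real_inner_smul_left, hyy]
        have hny2 : (0:ℝ) < ‖y‖ ^ 2 := by positivity
        have : ⟪L y, y⟫ = ‖y‖ ^ 2 * ⟪L v, v⟫ := by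
          rw [hsc]; field_simp
        rw [hexp, this]
        nlinarith [hny2]
    -- pick an almost-minimizing unit vector
    have hCpos : 0 < ‖C‖ := by
      have h1 := hlow u
      rw [hu] at h1
      by_contra hc
      push_neg at hc
      have : ‖C‖ = 0 := le_antisymm hc (norm_nonneg _)
      rw [this, zero_mul] at h1
      linarith
    set ε : ℝ := (‖C‖ ^ 2 * (‖T‖ + 1))⁻¹ with hε
    have hεpos : 0 < ε := by
      apply inv_pos.2
      have : (0:ℝ) ≤ ‖T‖ := norm_nonneg _
      positivity
    obtain ⟨r, hrS, hrlt⟩ := exists_lt_of_csInf_lt hSne (show sInf S < β + ε by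
      rw [← hβ]; linarith)
    obtain ⟨v, hv, rfl⟩ := hrS
    have hβle : β ≤ ⟪L v, v⟫ := csInf_le hSbd ⟨v, hv, rfl⟩
    have hTvv : ⟪T v, v⟫ < ε := by
      have : ⟪T v, v⟫ = ⟪L v, v⟫ - β := by
        rw [hTy, inner_sub_left, real_inner_smul_left]
        have hvv : ⟪v, v⟫ = (1:ℝ) := by
          rw [real_inner_self_eq_norm_sq, hv]; norm_num
        rw [hvv]; ring
      rw [this]; linarith
    have hcs := aux_cs T hTsa hTpos v
    have hlb : 1 ≤ ‖C‖ * ‖T v‖ := by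
      have := hlow v; rwa [hv] at this
    have hTv2 : 1 ≤ ‖C‖ ^ 2 * ‖T v‖ ^ 2 := by nlinarith [norm_nonneg (T v)]
    have hub : ‖T v‖ ^ 2 ≤ ‖T‖ * ε := by
      calc ‖T v‖ ^ 2 ≤ ‖T‖ * ⟪T v, v⟫ := hcs
      _ ≤ ‖T‖ * ε := by
          apply mul_le_mul_of_nonneg_left (le_of_lt hTvv) (norm_nonneg _)
    have hfin : ‖C‖ ^ 2 * (‖T‖ * ε) < 1 := by
      have hD : (0:ℝ) < ‖C‖ ^ 2 * (‖T‖ + 1) := by positivity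
      have heq : ‖C‖ ^ 2 * (‖T‖ * ε) = (‖C‖ ^ 2 * ‖T‖) / (‖C‖ ^ 2 * (‖T‖ + 1)) := by
        rw [hε]; field_simp
      rw [heq, div_lt_one hD]
      nlinarith [hCpos]
    nlinarith [sq_nonneg ‖C‖]
  rcases eq_or_ne x 0 with rfl | hx
  · simp
  · have hnx : ‖x‖ ≠ 0 := norm_ne_zero_iff.mpr hx
    set v : H := ‖x‖⁻¹ • x with hv
    have hvn : ‖v‖ = 1 := by
      rw [hv, norm_smul]; simp [abs_of_nonneg (inv_nonneg.2 (norm_nonneg x)), hnx]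
    have h1 := key v hvn
    have hsc : ⟪L v, v⟫ = ‖x‖⁻¹ ^ 2 * ⟪L x, x⟫ := by
      rw [hv, ContinuousLinearMap.map_smul, real_inner_smul_left, real_inner_smul_right]
      ring
    have hexp : ⟪L x, x⟫ = ‖x‖ ^ 2 * ⟪L v, v⟫ := by rw [hsc]; field_simp
    rw [hexp]
    have hnx2 : (0:ℝ) < ‖x‖ ^ 2 := by positivity
    nlinarith [hnx2]

end aux

section aux2
variable {H : Type*} [NormedAddCommGroup H] [InnerProductSpace ℝ H] [CompleteSpace H]
variable (L : H →L[ℝ] H)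

lemma aux_Eapp (s t : ℝ) (x : H) :
    NormedSpace.exp (-(s • L)) (NormedSpace.exp (-(t • L)) x)
      = NormedSpace.exp (-((s + t) • L)) x := by
  have hcomm : Commute (-(s • L)) (-(t • L)) :=
    (((Commute.refl L).smul_left s).smul_right t).neg_left.neg_right
  have h : NormedSpace.exp (-((s + t) • L))
      = NormedSpace.exp (-(s • L)) * NormedSpace.exp (-(t • L)) := by
    rw [show -((s + t) • L) = -(s • L) + -(t • L) by rw [add_smul]; abel]
    exact NormedSpace.exp_add_of_commute_of_mem_ball (𝕂 := ℝ) hcomm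
      ((NormedSpace.expSeries_radius_eq_top ℝ (H →L[ℝ] H)).symm ▸ edist_lt_top _ _)
      ((NormedSpace.expSeries_radius_eq_top ℝ (H →L[ℝ] H)).symm ▸ edist_lt_top _ _)
  rw [h]; rfl

lemma aux_Esa (hsa : IsSelfAdjoint L) (t : ℝ) :
    IsSelfAdjoint (NormedSpace.exp (-(t • L))) := by
  rw [IsSelfAdjoint, NormedSpace.star_exp, star_neg, star_smul, star_trivial, hsa.star_eq]

lemma aux_deriv (g : H) (t : ℝ) :
    HasDerivAt (fun s : ℝ => NormedSpace.exp (-(s • L)) g)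
      (-(L (NormedSpace.exp (-(t • L)) g))) t := by
  have h0 := hasDerivAt_exp_smul_const (𝕂 := ℝ) (-L) t
  simp only [smul_neg] at h0
  have h1 := h0.clm_apply (hasDerivAt_const t g)
  simp only [map_zero, add_zero, ContinuousLinearMap.mul_apply, ContinuousLinearMap.neg_apply] at h1
  have hcomm : Commute L (NormedSpace.exp (-(t • L))) :=
    (((Commute.refl L).smul_right t).neg_right).exp_right
  have h2 : NormedSpace.exp (-(t • L)) ((-L) g) = -(L (NormedSpace.exp (-(t • L)) g)) := by
    have := congrFun (congrArg DFunLike.coe hcomm.eq) g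
    simp only [ContinuousLinearMap.mul_apply] at this
    simp [← this]
  convert h1 using 1
  have h3 := congrFun (congrArg DFunLike.coe hcomm.eq) g
  simp only [ContinuousLinearMap.mul_apply] at h3
  simp [ContinuousLinearMap.neg_apply, h3]

lemma aux_cont (g : H) : Continuous (fun s : ℝ => NormedSpace.exp (-(s • L)) g) := by
  have : Differentiable ℝ (fun s : ℝ => NormedSpace.exp (-(s • L)) g) :=
    fun t => (aux_deriv L g t).differentiableAt
  exact this.continuous

lemma aux_decay (hsa : IsSelfAdjoint L) {m : ℝ}
    (hspec : spectrum ℝ L ⊆ Set.Ici m) (g : H) :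
    Antitone (fun t : ℝ => Real.exp (2 * m * t) * ‖NormedSpace.exp (-(t • L)) g‖ ^ 2) := by
  have hFd : ∀ t : ℝ, HasDerivAt
      (fun t : ℝ => Real.exp (2 * m * t) * ‖NormedSpace.exp (-(t • L)) g‖ ^ 2)
      (Real.exp (2 * m * t) * (2 * m) * ‖NormedSpace.exp (-(t • L)) g‖ ^ 2
        + Real.exp (2 * m * t) *
          ((⟪NormedSpace.exp (-(t • L)) g, -(L (NormedSpace.exp (-(t • L)) g))⟫)
            + ⟪-(L (NormedSpace.exp (-(t • L)) g)), NormedSpace.exp (-(t • L)) g⟫)) t := by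
    intro t
    have h1 : HasDerivAt (fun t : ℝ => Real.exp (2 * m * t)) (Real.exp (2 * m * t) * (2 * m)) t := by
      simpa using ((hasDerivAt_id t).const_mul (2 * m)).exp
    have h2 : HasDerivAt (fun s : ℝ => (⟪NormedSpace.exp (-(s • L)) g,
          NormedSpace.exp (-(s • L)) g⟫ : ℝ))
        ((⟪NormedSpace.exp (-(t • L)) g, -(L (NormedSpace.exp (-(t • L)) g))⟫)
          + ⟪-(L (NormedSpace.exp (-(t • L)) g)), NormedSpace.exp (-(t • L)) g⟫) t :=
      (aux_deriv L g t).inner ℝ (aux_deriv L g t)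
    have heq : (fun t : ℝ => Real.exp (2 * m * t) * ‖NormedSpace.exp (-(t • L)) g‖ ^ 2)
        = fun s : ℝ => Real.exp (2 * m * s) * (⟪NormedSpace.exp (-(s • L)) g,
            NormedSpace.exp (-(s • L)) g⟫ : ℝ) := by
      funext s; rw [real_inner_self_eq_norm_sq]
    rw [heq]
    have h3 := h1.mul h2
    refine h3.congr_deriv ?_
    rw [real_inner_self_eq_norm_sq]

  apply antitone_of_deriv_nonpos
  · exact fun t => (hFd t).differentiableAt
  · intro t
    rw [(hFd t).deriv]
    set w := NormedSpace.exp (-(t • L)) g with hw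
    have hco := aux_coercive L hsa hspec w
    have h1 : (⟪w, -(L w)⟫ : ℝ) = -⟪L w, w⟫ := by
      rw [inner_neg_right, real_inner_comm]
    have h2 : (⟪-(L w), w⟫ : ℝ) = -⟪L w, w⟫ := by rw [inner_neg_left]
    rw [h1, h2]
    have h3 := mul_le_mul_of_nonneg_left hco (Real.exp_pos (2 * m * t)).le
    nlinarith [h3]


lemma aux_alg {x z c a : ℝ} (hx : 0 ≤ x) (hz : 0 ≤ z) (hc : 0 ≤ c) (ha : 1 ≤ a)
    (h1 : a * c ≤ x) (h2 : c ^ 2 ≤ x * z) : (a + a⁻¹) * c ≤ x + z := by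
  have ha0 : (0:ℝ) < a := lt_of_lt_of_le one_pos ha
  have hainv : a⁻¹ ≤ 1 := inv_le_one_of_one_le₀ ha
  have hainv0 : 0 < a⁻¹ := inv_pos.2 ha0
  rcases eq_or_lt_of_le hx with h | hxpos
  · have hc0 : c = 0 := by nlinarith
    rw [hc0, mul_zero]
    linarith
  · have hkey : (x - a * c) * (x - a⁻¹ * c) ≥ 0 := by
      apply mul_nonneg
      · linarith
      · have : a⁻¹ * c ≤ c := by nlinarith
        have : c ≤ a * c := by nlinarith
        linarith
    have hinv : a * a⁻¹ = 1 := mul_inv_cancel₀ (ne_of_gt ha0)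
    nlinarith [hkey, h2, hxpos, mul_pos hxpos hxpos]

lemma aux_int (m h : ℝ) (hm : 0 < m) :
    ∫ s in (0:ℝ)..h, (Real.exp (2 * m * s) + Real.exp (-(2 * m * s)))
      = (Real.exp (2 * m * h) - Real.exp (-(2 * m * h))) / (2 * m) := by
  have hG : ∀ s ∈ Set.uIcc (0:ℝ) h, HasDerivAt
      (fun s : ℝ => (Real.exp (2 * m * s) - Real.exp (-(2 * m * s))) / (2 * m))
      (Real.exp (2 * m * s) + Real.exp (-(2 * m * s))) s := by
    intro s _
    have hlin : HasDerivAt (fun s : ℝ => 2 * m * s) (2 * m) s := by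
      simpa using (hasDerivAt_id s).const_mul (2 * m)
    have h1 := hlin.exp
    have h2 := hlin.neg.exp
    have h3 := (h1.sub h2).div_const (2 * m)
    refine h3.congr_deriv ?_
    simp only [Pi.neg_apply]
    field_simp
    ring
  rw [intervalIntegral.integral_eq_sub_of_hasDerivAt hG
    (Continuous.intervalIntegrable (by continuity) _ _)]
  simp

lemma aux_key (hsa : IsSelfAdjoint L) {m : ℝ} (hm : 0 < m) {τ : ℝ} (hτ : 0 < τ)
    (hspec : spectrum ℝ L ⊆ Set.Ici m) (g : H) :
    ‖NormedSpace.exp (-((τ/2) • L)) g‖ ^ 2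
        * ((Real.exp (m * τ) - Real.exp (-(m * τ))) / (2 * m))
      ≤ ∫ t in (0:ℝ)..τ, ‖NormedSpace.exp (-(t • L)) g‖ ^ 2 := by
  set φ : ℝ → ℝ := fun t => ‖NormedSpace.exp (-(t • L)) g‖ ^ 2 with hφ
  have hφc : Continuous φ := ((aux_cont L g).norm.pow 2)
  set c : ℝ := φ (τ/2) with hc
  have hcnn : 0 ≤ c := by rw [hc]; positivity
  -- decay
  have hdec := aux_decay L hsa hspec g
  -- midpoint log-convexity
  have hmid : ∀ t : ℝ, c ≤ ‖NormedSpace.exp (-(t • L)) g‖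
      * ‖NormedSpace.exp (-((τ - t) • L)) g‖ := by
    intro t
    have h1 : c = ⟪NormedSpace.exp (-((τ/2) • L)) g, NormedSpace.exp (-((τ/2) • L)) g⟫ := by
      rw [hc, hφ, real_inner_self_eq_norm_sq]
    have h2 : (⟪NormedSpace.exp (-((τ/2) • L)) g, NormedSpace.exp (-((τ/2) • L)) g⟫ : ℝ)
        = ⟪g, NormedSpace.exp (-(τ • L)) g⟫ := by
      have hs := (aux_Esa L hsa (τ/2)).isSymmetric g (NormedSpace.exp (-((τ/2) • L)) g)
      simp only [ContinuousLinearMap.coe_coe] at hs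
      rw [hs, aux_Eapp]
      norm_num
    have h3 : (⟪NormedSpace.exp (-(t • L)) g, NormedSpace.exp (-((τ - t) • L)) g⟫ : ℝ)
        = ⟪g, NormedSpace.exp (-(τ • L)) g⟫ := by
      have hs := (aux_Esa L hsa t).isSymmetric g (NormedSpace.exp (-((τ - t) • L)) g)
      simp only [ContinuousLinearMap.coe_coe] at hs
      rw [hs, aux_Eapp]
      norm_num
    calc c = ⟪NormedSpace.exp (-(t • L)) g, NormedSpace.exp (-((τ - t) • L)) g⟫ := by
          rw [h1, h2, ← h3]
    _ ≤ _ := real_inner_le_norm _ _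
  -- pointwise comparison on [0, τ/2]
  have hpt : ∀ t ∈ Set.Icc (0:ℝ) (τ/2),
      (Real.exp (2 * m * (τ/2 - t)) + Real.exp (-(2 * m * (τ/2 - t)))) * c
        ≤ φ t + φ (τ - t) := by
    intro t ht
    obtain ⟨ht0, ht2⟩ := ht
    set a : ℝ := Real.exp (2 * m * (τ/2 - t)) with haa
    have ha1 : 1 ≤ a := by
      rw [haa]
      apply Real.one_le_exp
      nlinarith
    have hxnn : 0 ≤ φ t := by rw [hφ]; positivity
    have hznn : 0 ≤ φ (τ - t) := by rw [hφ]; positivity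
    have hdec1 : a * c ≤ φ t := by
      have h4 := hdec ht2
      simp only at h4
      -- h4 : exp (2m(τ/2)) * φ(τ/2) ≤ exp (2mt) * φ t  -- as functions
      have h5 : Real.exp (2 * m * (τ/2)) * c ≤ Real.exp (2 * m * t) * φ t := h4
      have he : a = Real.exp (2 * m * (τ/2)) / Real.exp (2 * m * t) := by
        rw [haa, ← Real.exp_sub]; ring_nf
      rw [he, div_mul_eq_mul_div, div_le_iff₀ (Real.exp_pos _)]
      calc Real.exp (2 * m * (τ/2)) * c ≤ Real.exp (2 * m * t) * φ t := h5
      _ = φ t * Real.exp (2 * m * t) := by ring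
    have hmid1 : c ^ 2 ≤ φ t * φ (τ - t) := by
      have := hmid t
      have h6 : (‖NormedSpace.exp (-(t • L)) g‖ * ‖NormedSpace.exp (-((τ - t) • L)) g‖) ^ 2
          = φ t * φ (τ - t) := by rw [hφ]; ring
      nlinarith [this, hcnn, norm_nonneg (NormedSpace.exp (-(t • L)) g),
        norm_nonneg (NormedSpace.exp (-((τ - t) • L)) g)]
    have hainv : Real.exp (-(2 * m * (τ/2 - t))) = a⁻¹ := by
      rw [haa, Real.exp_neg]
    rw [hainv]
    exact aux_alg hxnn hznn hcnn ha1 hdec1 hmid1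
  -- integrate
  have hτ2 : (0:ℝ) ≤ τ/2 := by linarith
  have hint1 : IntervalIntegrable (fun t => (Real.exp (2 * m * (τ/2 - t))
      + Real.exp (-(2 * m * (τ/2 - t)))) * c) volume 0 (τ/2) :=
    Continuous.intervalIntegrable (by continuity) _ _
  have hφint : ∀ u v : ℝ, IntervalIntegrable φ volume u v := fun u v =>
    Continuous.intervalIntegrable hφc _ _
  have hφsubc : Continuous (fun t => φ (τ - t)) :=
    hφc.comp (continuous_const.sub continuous_id)
  have hint2 : IntervalIntegrable (fun t => φ t + φ (τ - t)) volume 0 (τ/2) :=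
    ((hφc.add hφsubc).intervalIntegrable _ _)
  have hmono := intervalIntegral.integral_mono_on hτ2 hint1 hint2 hpt
  -- LHS integral value
  have hLHS : (∫ t in (0:ℝ)..(τ/2), (Real.exp (2 * m * (τ/2 - t))
      + Real.exp (-(2 * m * (τ/2 - t)))) * c)
      = (Real.exp (m * τ) - Real.exp (-(m * τ))) / (2 * m) * c := by
    have hsub := intervalIntegral.integral_comp_sub_left
      (fun s => (Real.exp (2 * m * s) + Real.exp (-(2 * m * s))) * c) (τ/2)
      (a := 0) (b := τ/2)
    simp only [sub_zero, sub_self] at hsub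
    rw [hsub, intervalIntegral.integral_mul_const, aux_int m (τ/2) hm]
    have : 2 * m * (τ/2) = m * τ := by ring
    rw [this]
  -- RHS integral value
  have hRHS : (∫ t in (0:ℝ)..(τ/2), (φ t + φ (τ - t)))
      = ∫ t in (0:ℝ)..τ, φ t := by
    rw [intervalIntegral.integral_add (hφint 0 (τ/2))
      (hφsubc.intervalIntegrable _ _)]
    have hsub := intervalIntegral.integral_comp_sub_left φ τ (a := 0) (b := τ/2)
    simp only [sub_zero] at hsub
    have hhalf : τ - τ/2 = τ/2 := by ring
    rw [hhalf] at hsub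
    rw [hsub]
    exact intervalIntegral.integral_add_adjacent_intervals (hφint 0 (τ/2)) (hφint (τ/2) τ)
  rw [hLHS, hRHS] at hmono
  calc ‖NormedSpace.exp (-((τ/2) • L)) g‖ ^ 2
        * ((Real.exp (m * τ) - Real.exp (-(m * τ))) / (2 * m))
      = (Real.exp (m * τ) - Real.exp (-(m * τ))) / (2 * m) * c := by rw [hc, hφ]; ring
  _ ≤ ∫ t in (0:ℝ)..τ, φ t := hmono

end aux2

/-- Almost-orthogonality of forward and backward semigroup modes. -/
theorem stmt5
    {H : Type*} [NormedAddCommGroup H] [InnerProductSpace ℝ H] [CompleteSpace H]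
    (L : H →L[ℝ] H) (hsa : IsSelfAdjoint L)
    (P_W τ : ℝ) (hPW : 0 < P_W) (hτ : 0 < τ)
    (hspec : spectrum ℝ L ⊆ Set.Ici (1 / Real.sqrt P_W))
    (gp gm : H) :
    let E : ℝ → H →L[ℝ] H := fun t => NormedSpace.exp (-(t • L))
    let R : ℝ := 2 * τ * Real.exp (-(τ / Real.sqrt P_W)) /
      (Real.sqrt P_W * (1 - Real.exp (-(2 * τ / Real.sqrt P_W))))
    (1 - R) * ((τ⁻¹ * ∫ t in (0:ℝ)..τ, ‖E t gp‖ ^ 2)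
        + (τ⁻¹ * ∫ t in (0:ℝ)..τ, ‖E (τ - t) gm‖ ^ 2))
      ≤ τ⁻¹ * ∫ t in (0:ℝ)..τ, ‖E t gp + E (τ - t) gm‖ ^ 2 := by
  intro E R
  have hEdef : ∀ t : ℝ, E t = NormedSpace.exp (-(t • L)) := fun t => rfl
  have hRdef : R = 2 * τ * Real.exp (-(τ / Real.sqrt P_W)) /
      (Real.sqrt P_W * (1 - Real.exp (-(2 * τ / Real.sqrt P_W)))) := rfl
  simp only [hEdef]
  set m : ℝ := 1 / Real.sqrt P_W with hmdef
  have hsP : 0 < Real.sqrt P_W := Real.sqrt_pos.2 hPW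
  have hm : 0 < m := by rw [hmdef]; positivity
  have hsm : Real.sqrt P_W = m⁻¹ := by rw [hmdef, one_div, inv_inv]
  set Sm : ℝ := (Real.exp (m * τ) - Real.exp (-(m * τ))) / (2 * m) with hSmdef
  have hSm : 0 < Sm := by
    have h1 : Real.exp (-(m * τ)) < Real.exp (m * τ) := Real.exp_lt_exp.2 (by nlinarith)
    rw [hSmdef]
    apply div_pos (by linarith) (by linarith)
  -- R * Sm = τ
  have hτm : τ / Real.sqrt P_W = m * τ := by rw [hsm, div_inv_eq_mul, mul_comm]
  have h2τm : 2 * τ / Real.sqrt P_W = 2 * (m * τ) := by rw [hsm, div_inv_eq_mul]; ring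
  set y : ℝ := Real.exp (-(m * τ)) with hy
  have hy0 : 0 < y := Real.exp_pos _
  have hy1 : y < 1 := by rw [hy]; exact Real.exp_lt_one_iff.2 (by nlinarith)
  have hyinv : Real.exp (m * τ) = y⁻¹ := by rw [hy, Real.exp_neg, inv_inv]
  have hy2 : Real.exp (-(2 * (m * τ))) = y ^ 2 := by
    rw [show -(2 * (m * τ)) = -(m * τ) + -(m * τ) by ring, Real.exp_add, ← hy]; ring
  have hRSm : R * Sm = τ := by
    rw [hRdef, hτm, h2τm, hSmdef, hyinv, hy2, ← hy, hsm]
    have h1my : 1 - y ^ 2 ≠ 0 := by nlinarith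
    field_simp
  have hR0 : 0 < R := by
    have hReq : R = τ / Sm := by rw [eq_div_iff hSm.ne']; exact hRSm
    rw [hReq]; positivity
  -- cross term
  set K : ℝ := ⟪NormedSpace.exp (-((τ/2) • L)) gp, NormedSpace.exp (-((τ/2) • L)) gm⟫
    with hK
  have hgen : ∀ s : ℝ, (⟪NormedSpace.exp (-(s • L)) gp,
      NormedSpace.exp (-((τ - s) • L)) gm⟫ : ℝ)
      = ⟪gp, NormedSpace.exp (-(τ • L)) gm⟫ := by
    intro s
    have hs := (aux_Esa L hsa s).isSymmetric gp (NormedSpace.exp (-((τ - s) • L)) gm)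
    simp only [ContinuousLinearMap.coe_coe] at hs
    rw [hs, aux_Eapp]
    norm_num
  have hcross : ∀ t : ℝ, (⟪NormedSpace.exp (-(t • L)) gp,
      NormedSpace.exp (-((τ - t) • L)) gm⟫ : ℝ) = K := by
    intro t
    have h1 := hgen t
    have h2 := hgen (τ/2)
    rw [show τ - τ/2 = τ/2 by ring] at h2
    rw [h1, ← h2, hK]
  -- integrals
  set Ip : ℝ := ∫ t in (0:ℝ)..τ, ‖NormedSpace.exp (-(t • L)) gp‖ ^ 2 with hIp
  set Im : ℝ := ∫ t in (0:ℝ)..τ, ‖NormedSpace.exp (-(t • L)) gm‖ ^ 2 with hImdef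
  have hcgp : Continuous fun t : ℝ => NormedSpace.exp (-(t • L)) gp := aux_cont L gp
  have hcgm : Continuous fun t : ℝ => NormedSpace.exp (-((τ - t) • L)) gm :=
    (aux_cont L gm).comp (continuous_const.sub continuous_id)
  have hIm : (∫ t in (0:ℝ)..τ, ‖NormedSpace.exp (-((τ - t) • L)) gm‖ ^ 2) = Im := by
    have h := intervalIntegral.integral_comp_sub_left
      (fun s => ‖NormedSpace.exp (-(s • L)) gm‖ ^ 2) τ (a := 0) (b := τ)
    simp only [sub_zero, sub_self] at h
    rw [hImdef, ← h]
  have hIu : (∫ t in (0:ℝ)..τ, ‖NormedSpace.exp (-(t • L)) gp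
      + NormedSpace.exp (-((τ - t) • L)) gm‖ ^ 2) = Ip + Im + 2 * (τ * K) := by
    have hpt : ∀ t ∈ Set.uIcc (0:ℝ) τ, ‖NormedSpace.exp (-(t • L)) gp
        + NormedSpace.exp (-((τ - t) • L)) gm‖ ^ 2
        = (‖NormedSpace.exp (-(t • L)) gp‖ ^ 2
          + ‖NormedSpace.exp (-((τ - t) • L)) gm‖ ^ 2) + 2 * K := by
      intro t _
      rw [norm_add_sq_real, hcross t]
      ring
    rw [intervalIntegral.integral_congr hpt, intervalIntegral.integral_add
      (f := fun t => ‖NormedSpace.exp (-(t • L)) gp‖ ^ 2 + ‖NormedSpace.exp (-((τ - t) • L)) gm‖ ^ 2)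
      (((hcgp.norm.pow 2).add (hcgm.norm.pow 2)).intervalIntegrable _ _)
      (intervalIntegrable_const), intervalIntegral.integral_add
      (f := fun t => ‖NormedSpace.exp (-(t • L)) gp‖ ^ 2)
      (g := fun t => ‖NormedSpace.exp (-((τ - t) • L)) gm‖ ^ 2)
      ((hcgp.norm.pow 2).intervalIntegrable _ _) ((hcgm.norm.pow 2).intervalIntegrable _ _),
      intervalIntegral.integral_const, hIm]
    simp only [smul_eq_mul, sub_zero]
    ring
  -- key inequalities
  have hspec' : spectrum ℝ L ⊆ Set.Ici m := hspec
  have hkeyp := aux_key L hsa hm hτ hspec' gp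
  have hkeym := aux_key L hsa hm hτ hspec' gm
  rw [← hSmdef] at hkeyp hkeym
  rw [← hIp] at hkeyp
  rw [← hImdef] at hkeym
  set np : ℝ := ‖NormedSpace.exp (-((τ/2) • L)) gp‖ with hnp
  set nm : ℝ := ‖NormedSpace.exp (-((τ/2) • L)) gm‖ with hnm
  have hKn : -K ≤ np * nm := by
    have h := real_inner_le_norm (NormedSpace.exp (-((τ/2) • L)) gp)
      (-(NormedSpace.exp (-((τ/2) • L)) gm))
    rw [inner_neg_right, norm_neg] at h
    rw [hK, hnp, hnm]
    exact h
  have h6 : -(2 * K) ≤ np ^ 2 + nm ^ 2 := by nlinarith [sq_nonneg (np - nm), hKn]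
  have h7 : -(2 * K) * Sm ≤ Ip + Im := by
    nlinarith [mul_le_mul_of_nonneg_right h6 hSm.le, hkeyp, hkeym]
  have hrel : -(2 * (τ * K)) ≤ R * (Ip + Im) := by
    have h8 := mul_le_mul_of_nonneg_left h7 hR0.le
    nlinarith [h8, hRSm]
  have hfin : (1 - R) * (Ip + Im) ≤ Ip + Im + 2 * (τ * K) := by nlinarith [hrel]
  rw [hIm, hIu]
  calc (1 - R) * (τ⁻¹ * Ip + τ⁻¹ * Im) = τ⁻¹ * ((1 - R) * (Ip + Im)) := by ring
  _ ≤ τ⁻¹ * (Ip + Im + 2 * (τ * K)) := by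
      exact mul_le_mul_of_nonneg_left hfin (inv_nonneg.2 hτ.le)
end

section
/- Chaining of weak Poincaré conjugates: let β₁, β₂ be decreasing functions on (0,∞) tending to 0, with associated K-transforms K_i(u) = u β_i(1/u) and conjugates K_i*. Define β(s) = inf{s₁ β₂(s₂) + β₁(s₁) : s₁, s₂ > 0, s₁ s₂ = s}. Then the convex conjugate K* of K(u) = u β(1/u) satisfies K* = K₂* ∘ K₁*. -/
open Real Set Filter

/-- Chaining of weak Poincaré conjugates: the conjugate of the chained `β` is the
composition `K₂* ∘ K₁*`. -/
theorem stmt14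
    (β₁ β₂ β : ℝ → ℝ)
    (hβ₁_anti : AntitoneOn β₁ (Set.Ioi 0)) (hβ₂_anti : AntitoneOn β₂ (Set.Ioi 0))
    (hβ₁_lim : Tendsto β₁ atTop (nhds 0)) (hβ₂_lim : Tendsto β₂ atTop (nhds 0))
    (hβ : ∀ s > (0:ℝ), IsGLB
      {x | ∃ s₁ > (0:ℝ), ∃ s₂ > (0:ℝ), s₁ * s₂ = s ∧ x = s₁ * β₂ s₂ + β₁ s₁} (β s))
    (K1s K2s Ks : ℝ → ℝ)
    (hK1 : ∀ w ≥ (0:ℝ), IsLUB {x | ∃ u ≥ (0:ℝ), x = u * w - u * β₁ u⁻¹} (K1s w))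
    (hK2 : ∀ w ≥ (0:ℝ), IsLUB {x | ∃ u ≥ (0:ℝ), x = u * w - u * β₂ u⁻¹} (K2s w))
    (hKs : ∀ w ≥ (0:ℝ), IsLUB {x | ∃ u ≥ (0:ℝ), x = u * w - u * β u⁻¹} (Ks w)) :
    ∀ w ≥ (0:ℝ), Ks w = K2s (K1s w) := by
  -- β₂ is nonnegative on (0,∞)
  have hβ₂_nonneg : ∀ s > (0:ℝ), 0 ≤ β₂ s := by
    intro s hs
    refine le_of_tendsto hβ₂_lim ?_
    filter_upwards [eventually_ge_atTop s] with t ht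
    exact hβ₂_anti hs (lt_of_lt_of_le hs ht) ht
  intro w hw
  have hS := hKs w hw
  have h1 := hK1 w hw
  have hW0 : (0:ℝ) ≤ K1s w := h1.1 ⟨0, le_refl 0, by ring⟩
  have h2 := hK2 (K1s w) hW0
  refine hS.unique ⟨?_, ?_⟩
  · -- K2s (K1s w) is an upper bound of the Ks-set
    rintro x ⟨u, hu, rfl⟩
    rcases eq_or_lt_of_le hu with h | h
    · have : (0:ℝ) ≤ K2s (K1s w) := h2.1 ⟨0, le_refl 0, by ring⟩
      rw [← h]; simpa using this
    · have hglb := hβ u⁻¹ (inv_pos.2 h)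
      have hc : (u * w - K2s (K1s w)) / u ∈ lowerBounds
          {x | ∃ s₁ > (0:ℝ), ∃ s₂ > (0:ℝ), s₁ * s₂ = u⁻¹ ∧ x = s₁ * β₂ s₂ + β₁ s₁} := by
        rintro x ⟨s₁, hs₁, s₂, hs₂, hprod, rfl⟩
        set v := u * s₁ with hv
        have hvpos : 0 < v := mul_pos h hs₁
        have hs₂v : s₂ = v⁻¹ := by
          have : v * s₂ = 1 := by
            rw [hv, mul_assoc, hprod]
            field_simp
          field_simp at this ⊢
          linarith [this]
        -- element of K2 set at v
        have hel2 : v * K1s w - v * β₂ v⁻¹ ≤ K2s (K1s w) :=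
          h2.1 ⟨v, le_of_lt hvpos, rfl⟩
        -- element of K1 set at u/v
        have hel1 : (u / v) * w - (u / v) * β₁ (u / v)⁻¹ ≤ K1s w :=
          h1.1 ⟨u / v, le_of_lt (div_pos h hvpos), rfl⟩
        have hinv : (u / v)⁻¹ = s₁ := by
          rw [hv]; field_simp
        rw [hinv] at hel1
        have hel1' : u * w - u * β₁ s₁ ≤ v * K1s w := by
          have := mul_le_mul_of_nonneg_left hel1 (le_of_lt hvpos)
          have hvne : v ≠ 0 := ne_of_gt hvpos
          calc u * w - u * β₁ s₁ = v * ((u / v) * w - (u / v) * β₁ s₁) := by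
                field_simp
            _ ≤ v * K1s w := this
        rw [div_le_iff₀ h]
        have hvs : v * β₂ v⁻¹ = u * s₁ * β₂ s₂ := by rw [hs₂v, hv]
        nlinarith [hel2, hel1']
      have hβle : (u * w - K2s (K1s w)) / u ≤ β u⁻¹ := hglb.2 hc
      rw [div_le_iff₀ h] at hβle
      nlinarith [hβle]
  · -- K2s (K1s w) is ≤ any upper bound b of the Ks-set
    rintro b hb
    refine h2.2 ?_
    rintro x ⟨v, hv, rfl⟩
    rcases eq_or_lt_of_le hv with h | h
    · have h0 : (0:ℝ) ≤ b := hb ⟨0, le_refl 0, by ring⟩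
      rw [← h]; simpa using h0
    · -- show v * K1s w - v * β₂ v⁻¹ ≤ b, i.e. K1s w ≤ (b + v β₂ v⁻¹)/v
      have hub : (b + v * β₂ v⁻¹) / v ∈ upperBounds
          {x | ∃ u ≥ (0:ℝ), x = u * w - u * β₁ u⁻¹} := by
        rintro y ⟨u, hu, rfl⟩
        rcases eq_or_lt_of_le hu with h' | h'
        · rw [← h']
          have hb2 : 0 ≤ β₂ v⁻¹ := hβ₂_nonneg _ (inv_pos.2 h)
          have h0 : (0:ℝ) ≤ b := hb ⟨0, le_refl 0, by ring⟩
          have : (0:ℝ) ≤ (b + v * β₂ v⁻¹) / v :=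
            div_nonneg (by nlinarith) (le_of_lt h)
          simpa using this
        · -- u > 0; use u' = u * v in the Ks set
          set u' := u * v with hu'
          have hu'pos : 0 < u' := mul_pos h' h
          have hbel : u' * w - u' * β u'⁻¹ ≤ b := hb ⟨u', le_of_lt hu'pos, rfl⟩
          have hmem : u⁻¹ * β₂ v⁻¹ + β₁ u⁻¹ ∈
              {x | ∃ s₁ > (0:ℝ), ∃ s₂ > (0:ℝ), s₁ * s₂ = u'⁻¹ ∧ x = s₁ * β₂ s₂ + β₁ s₁} :=
            ⟨u⁻¹, inv_pos.2 h', v⁻¹, inv_pos.2 h, by rw [hu']; field_simp, rfl⟩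
          have hβle : β u'⁻¹ ≤ u⁻¹ * β₂ v⁻¹ + β₁ u⁻¹ :=
            (hβ u'⁻¹ (inv_pos.2 hu'pos)).1 hmem
          -- multiply by u' > 0
          have key : u' * w - u' * β₁ u⁻¹ - v * β₂ v⁻¹ ≤ b := by
            have h3 : u' * β u'⁻¹ ≤ u' * (u⁻¹ * β₂ v⁻¹ + β₁ u⁻¹) :=
              mul_le_mul_of_nonneg_left hβle (le_of_lt hu'pos)
            have h4 : u' * (u⁻¹ * β₂ v⁻¹) = v * β₂ v⁻¹ := by
              rw [hu']; field_simp
            nlinarith [hbel, h3]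
          rw [le_div_iff₀ h]
          have : (u * w - u * β₁ u⁻¹) * v = u' * w - u' * β₁ u⁻¹ := by
            rw [hu']; ring
          nlinarith [key]
      have hK1le : K1s w ≤ (b + v * β₂ v⁻¹) / v := h1.2 hub
      rw [le_div_iff₀ h] at hK1le
      nlinarith [hK1le]
end

section
/- Decay rate from polynomial β: if β(s) = η₀ s^{-η₁} with η₀, η₁ > 0, then K*(w) = (η₀η₁ / (η₀(1+η₁))^{1+1/η₁}) w^{1+1/η₁}, and the resulting decay function satisfies F_a^{-1}(t) ≤ η₀ (1+η₁)^{1+η₁} t^{-η₁}. -/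
open Real Set intervalIntegral


lemma lub_aux (η₀ η₁ : ℝ) (h0 : 0 < η₀) (h1 : 0 < η₁) (w : ℝ) (hw : 0 ≤ w) :
    IsLUB {x | ∃ u ≥ (0:ℝ), x = u * w - η₀ * u ^ (1 + η₁)}
      ((η₀ * η₁ / (η₀ * (1 + η₁)) ^ (1 + 1 / η₁)) * w ^ (1 + 1 / η₁)) := by
  have hp : (0:ℝ) < 1 + η₁ := by linarith
  have hK : (0:ℝ) < η₀ * (1 + η₁) := by positivity
  set K : ℝ := η₀ * (1 + η₁) with hKdef
  set s : ℝ := K ^ (1 / η₁) with hsdef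
  have hs : 0 < s := rpow_pos_of_pos hK _
  have hKq : K ^ (1 + 1 / η₁) = K * s := by
    rw [rpow_add hK, rpow_one]
  have hCalt : η₀ * η₁ / K ^ (1 + 1 / η₁) = η₁ / ((1 + η₁) * s) := by
    rw [hKq, hKdef]; field_simp
  have hpq : (1 + η₁).HolderConjugate (1 + 1 / η₁) := by
    rw [Real.holderConjugate_iff]
    constructor
    · linarith
    · field_simp
      ring
  constructor
  · -- upper bound
    rintro x ⟨u, hu, rfl⟩
    set l : ℝ := K ^ (1 / (1 + η₁)) with hldef
    have hl : 0 < l := rpow_pos_of_pos hK _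
    have hlp : l ^ (1 + η₁) = K := by
      rw [hldef, ← rpow_mul hK.le]
      rw [one_div_mul_cancel (by positivity), rpow_one]
    have hex2 : 1 / (1 + η₁) * (1 + 1 / η₁) = 1 / η₁ := by
      rw [div_mul_eq_mul_div, one_mul, div_eq_div_iff (by positivity) (by positivity)]
      field_simp
      ring
    have hlq : l ^ (1 + 1 / η₁) = s := by
      rw [hldef, ← rpow_mul hK.le, hex2, hsdef]
    have young := Real.young_inequality_of_nonneg
      (a := l * u) (b := w / l) (by positivity) (by positivity) hpq
    have h1' : l * u * (w / l) = u * w := by field_simp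
    have h2' : (l * u) ^ (1 + η₁) = K * u ^ (1 + η₁) := by
      rw [mul_rpow hl.le hu, hlp]
    have h3' : (w / l) ^ (1 + 1 / η₁) = w ^ (1 + 1 / η₁) / s := by
      rw [div_rpow hw hl.le, hlq]
    rw [h1', h2', h3'] at young
    have hKp : K * u ^ (1 + η₁) / (1 + η₁) = η₀ * u ^ (1 + η₁) := by
      rw [hKdef]; field_simp
    have hCw : w ^ (1 + 1 / η₁) / s / (1 + 1 / η₁)
        = η₀ * η₁ / K ^ (1 + 1 / η₁) * w ^ (1 + 1 / η₁) := by
      rw [hCalt]; field_simp; ring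
    rw [hKp, hCw] at young
    linarith
  · -- the sup value is attained, so any upper bound dominates it
    intro b hb
    apply hb
    refine ⟨w ^ (1 / η₁) / s, by positivity, ?_⟩
    have huw : w ^ (1 / η₁) / s * w = w ^ (1 + 1 / η₁) / s := by
      rw [div_mul_eq_mul_div]
      congr 1
      rw [rpow_add' hw (by positivity), rpow_one]
      ring
    have hex : 1 / η₁ * (1 + η₁) = 1 + 1 / η₁ := by
      field_simp
      ring
    have hsp : s ^ (1 + η₁) = K * s := by
      rw [hsdef, ← rpow_mul hK.le, hex, hKq]
    have hup : (w ^ (1 / η₁) / s) ^ (1 + η₁) = w ^ (1 + 1 / η₁) / (K * s) := by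
      rw [div_rpow (rpow_nonneg hw _) hs.le, ← rpow_mul hw, hex, hsp]
    rw [huw, hup, hCalt, hKdef]
    field_simp
    ring


lemma int_aux (η₀ η₁ a z : ℝ) (h0 : 0 < η₀) (h1 : 0 < η₁) (hz : 0 < z) (hza : z ≤ a) :
    (∫ w in z..a, ((η₀ * η₁ / (η₀ * (1 + η₁)) ^ (1 + 1 / η₁)) * w ^ (1 + 1 / η₁))⁻¹)
      = (η₀ * (1 + η₁)) ^ (1 + 1 / η₁) / η₀ * (z ^ (-(1 / η₁)) - a ^ (-(1 / η₁))) := by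
  have hp : (0:ℝ) < 1 + η₁ := by linarith
  have hK : (0:ℝ) < η₀ * (1 + η₁) := by positivity
  have hKq : (0:ℝ) < (η₀ * (1 + η₁)) ^ (1 + 1 / η₁) := rpow_pos_of_pos hK _
  have hC : (0:ℝ) < η₀ * η₁ / (η₀ * (1 + η₁)) ^ (1 + 1 / η₁) := by positivity
  have hcongr : ∀ w ∈ Set.uIcc z a,
      ((η₀ * η₁ / (η₀ * (1 + η₁)) ^ (1 + 1 / η₁)) * w ^ (1 + 1 / η₁))⁻¹
        = (η₀ * η₁ / (η₀ * (1 + η₁)) ^ (1 + 1 / η₁))⁻¹ * w ^ (-(1 + 1 / η₁)) := by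
    intro w hwmem
    rw [Set.uIcc_of_le hza] at hwmem
    have hw : 0 < w := lt_of_lt_of_le hz hwmem.1
    rw [mul_inv, rpow_neg hw.le]
  rw [intervalIntegral.integral_congr hcongr, intervalIntegral.integral_const_mul,
    integral_rpow (Or.inr ⟨by intro h; nlinarith [one_div_pos.mpr h1],
      by rw [Set.uIcc_of_le hza]; rintro ⟨h', _⟩; linarith⟩)]
  have he : -(1 + 1 / η₁) + 1 = -(1 / η₁) := by ring
  rw [he]
  field_simp
  ring

/-- Decay rate from polynomial `β(s) = η₀ s^{-η₁}`: explicit conjugate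
`K*(w) = (η₀η₁/(η₀(1+η₁))^{1+1/η₁}) w^{1+1/η₁}` and algebraic decay
`F_a⁻¹(t) ≤ η₀ (1+η₁)^{1+η₁} t^{-η₁}`. -/
theorem stmt16
    (η₀ η₁ a : ℝ) (h0 : 0 < η₀) (h1 : 0 < η₁) (ha : a ∈ Set.Ioc (0:ℝ) (1 / 4))
    (Finv : ℝ → ℝ)
    (hFinv : ∀ z ∈ Set.Ioo (0:ℝ) a,
      Finv (∫ w in z..a,
        ((η₀ * η₁ / (η₀ * (1 + η₁)) ^ (1 + 1 / η₁)) * w ^ (1 + 1 / η₁))⁻¹) = z)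
    (hFinv_range : ∀ t > (0:ℝ), Finv t ∈ Set.Ioo (0:ℝ) a)
    (hFinv_anti : AntitoneOn Finv (Set.Ioi 0)) :
    (∀ w ≥ (0:ℝ), IsLUB {x | ∃ u ≥ (0:ℝ), x = u * w - η₀ * u ^ (1 + η₁)}
      ((η₀ * η₁ / (η₀ * (1 + η₁)) ^ (1 + 1 / η₁)) * w ^ (1 + 1 / η₁))) ∧
    (∀ t > (0:ℝ), Finv t ≤ η₀ * (1 + η₁) ^ (1 + η₁) * t ^ (-η₁)) := by
  refine ⟨fun w hw => lub_aux η₀ η₁ h0 h1 w hw, ?_⟩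
  have hp : (0:ℝ) < 1 + η₁ := by linarith
  have hBq : (η₀ * (1 + η₁) ^ (1 + η₁)) ^ (-(1 / η₁))
      = (η₀ ^ (1 / η₁))⁻¹ * ((1 + η₁) ^ (1 + 1 / η₁))⁻¹ := by
    rw [mul_rpow h0.le (rpow_nonneg hp.le _), ← rpow_mul hp.le,
      show (1 + η₁) * (-(1 / η₁)) = -(1 + 1 / η₁) by field_simp; ring,
      rpow_neg h0.le, rpow_neg hp.le]
  have hKq' : (η₀ * (1 + η₁)) ^ (1 + 1 / η₁)
      = η₀ * η₀ ^ (1 / η₁) * (1 + η₁) ^ (1 + 1 / η₁) := by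
    rw [mul_rpow h0.le hp.le, rpow_add h0, rpow_one]
  have hconst : (η₀ * (1 + η₁)) ^ (1 + 1 / η₁) / η₀
      * (η₀ * (1 + η₁) ^ (1 + η₁)) ^ (-(1 / η₁)) = 1 := by
    rw [hKq', hBq]
    have hη : (0:ℝ) < η₀ ^ (1 / η₁) := rpow_pos_of_pos h0 _
    have hq : (0:ℝ) < (1 + η₁) ^ (1 + 1 / η₁) := rpow_pos_of_pos hp _
    field_simp
  intro t ht
  set z₀ : ℝ := η₀ * (1 + η₁) ^ (1 + η₁) * t ^ (-η₁) with hz₀def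
  have hz₀ : 0 < z₀ := by
    have := rpow_pos_of_pos ht (-η₁)
    have := rpow_pos_of_pos hp (1 + η₁)
    positivity
  by_cases hcase : z₀ < a
  · have hI := int_aux η₀ η₁ a z₀ h0 h1 hz₀ hcase.le
    have hFz := hFinv z₀ ⟨hz₀, hcase⟩
    have hKqpos : (0:ℝ) < (η₀ * (1 + η₁)) ^ (1 + 1 / η₁) / η₀ := by
      have := rpow_pos_of_pos (show (0:ℝ) < η₀ * (1 + η₁) by positivity) (1 + 1 / η₁)
      positivity
    have hlt : a ^ (-(1 / η₁)) < z₀ ^ (-(1 / η₁)) :=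
      rpow_lt_rpow_of_neg hz₀ hcase (by simp [one_div]; positivity)
    have hIpos : 0 < (∫ w in z₀..a,
        ((η₀ * η₁ / (η₀ * (1 + η₁)) ^ (1 + 1 / η₁)) * w ^ (1 + 1 / η₁))⁻¹) := by
      rw [hI]
      have : 0 < z₀ ^ (-(1 / η₁)) - a ^ (-(1 / η₁)) := by linarith
      positivity
    have hz₀e : z₀ ^ (-(1 / η₁))
        = (η₀ * (1 + η₁) ^ (1 + η₁)) ^ (-(1 / η₁)) * t := by
      rw [hz₀def, mul_rpow (by positivity) (rpow_nonneg ht.le _), ← rpow_mul ht.le]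
      congr 1
      rw [show -η₁ * -(1 / η₁) = 1 by field_simp, rpow_one]
    have hIle : (∫ w in z₀..a,
        ((η₀ * η₁ / (η₀ * (1 + η₁)) ^ (1 + 1 / η₁)) * w ^ (1 + 1 / η₁))⁻¹) ≤ t := by
      rw [hI]
      have hale : 0 < a ^ (-(1 / η₁)) := rpow_pos_of_pos ha.1 _
      calc (η₀ * (1 + η₁)) ^ (1 + 1 / η₁) / η₀ * (z₀ ^ (-(1 / η₁)) - a ^ (-(1 / η₁)))
          ≤ (η₀ * (1 + η₁)) ^ (1 + 1 / η₁) / η₀ * z₀ ^ (-(1 / η₁)) := by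
            apply mul_le_mul_of_nonneg_left (by linarith) hKqpos.le
        _ = t := by
            rw [hz₀e, ← mul_assoc, hconst, one_mul]
    have := hFinv_anti (Set.mem_Ioi.mpr hIpos) (Set.mem_Ioi.mpr ht) hIle
    rw [hFz] at this
    exact this
  · have := (hFinv_range t ht).2
    push_neg at hcase
    linarith
end

section
/- Decay rate from stretched-exponential β: if β(s) = η₀ exp(-η₁ s^{η₂}) with η₀, η₁, η₂ > 0, then there exists c > 0 such that for all sufficiently small w > 0, K*(w) ≥ c w (log(1/w))^{-1/η₂}, and the resulting decay function satisfies F_a^{-1}(t) ≤ C exp(-C' t^{η₂/(1+η₂)}) for some constants C, C' > 0. -/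
open Real Set intervalIntegral

/-- Decay rate from stretched-exponential `β(s) = η₀ exp(-η₁ s^{η₂})`: logarithmically
corrected lower bound on `K*` and stretched-exponential decay of `F_a⁻¹`. -/
theorem stmt17
    (η₀ η₁ η₂ a : ℝ) (h0 : 0 < η₀) (h1 : 0 < η₁) (h2 : 0 < η₂)
    (ha : a ∈ Set.Ioc (0:ℝ) (1 / 4))
    (Kstar : ℝ → ℝ)
    (hKstar : ∀ w ∈ Set.Ioc (0:ℝ) a,
      IsLUB {x | ∃ u ≥ (0:ℝ), x = u * w - u * (η₀ * Real.exp (-η₁ * (u⁻¹) ^ η₂))}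
        (Kstar w))
    (Finv : ℝ → ℝ)
    (hFinv : ∀ z ∈ Set.Ioo (0:ℝ) a, Finv (∫ w in z..a, (Kstar w)⁻¹) = z)
    (hFinv_range : ∀ t > (0:ℝ), Finv t ∈ Set.Ioo (0:ℝ) a)
    (hFinv_anti : AntitoneOn Finv (Set.Ioi 0)) :
    (∃ c > (0:ℝ), ∃ w₀ > (0:ℝ), ∀ w ∈ Set.Ioo (0:ℝ) w₀,
      c * w * (Real.log (1 / w)) ^ (-(1 / η₂)) ≤ Kstar w) ∧
    (∃ C > (0:ℝ), ∃ C' > (0:ℝ), ∀ t > (0:ℝ),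
      Finv t ≤ C * Real.exp (-C' * t ^ (η₂ / (1 + η₂)))) := by
  obtain ⟨ha0, ha4⟩ := ha
  have hη₂ : η₂ ≠ 0 := ne_of_gt h2
  have h1η₂ : (0:ℝ) < 1 + η₂ := by linarith
  set M : ℝ := max (2*η₀) (Real.exp 1) with hMdef
  have hM0 : (0:ℝ) < M := lt_of_lt_of_le (Real.exp_pos 1) (le_max_right _ _)
  have hM2 : 2*η₀ ≤ M := le_max_left _ _
  have hlogM : 1 ≤ Real.log M :=
    (Real.le_log_iff_exp_le hM0).mpr (le_max_right _ _)
  have hLpos : ∀ w : ℝ, 0 < w → w ≤ a → 1 ≤ Real.log M - Real.log w := by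
    intro w hw0 hwa
    have hw1 : w < 1 := by linarith
    have := Real.log_neg hw0 hw1
    linarith
  -- Key lower bound on Kstar
  have keyA : ∀ w : ℝ, 0 < w → w ≤ a →
      (η₁ / (Real.log M - Real.log w)) ^ (1/η₂) * w / 2 ≤ Kstar w := by
    intro w hw0 hwa
    have hL1 := hLpos w hw0 hwa
    have hL0 : 0 < Real.log M - Real.log w := by linarith
    set L : ℝ := Real.log M - Real.log w with hLdef
    have hbase : (0:ℝ) < η₁ / L := div_pos h1 hL0
    set u : ℝ := (η₁ / L) ^ (1/η₂) with hudef
    have hu0 : 0 < u := Real.rpow_pos_of_pos hbase _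
    have hinv : (u⁻¹) ^ η₂ = L / η₁ := by
      rw [hudef, ← Real.rpow_neg hbase.le, ← Real.rpow_mul hbase.le]
      rw [show -(1/η₂) * η₂ = -1 by field_simp]
      rw [Real.rpow_neg_one, inv_div]
    have hexp : Real.exp (-η₁ * (u⁻¹) ^ η₂) = w / M := by
      rw [hinv, show -η₁ * (L/η₁) = Real.log w - Real.log M by
        rw [hLdef]; field_simp; ring]
      rw [Real.exp_sub, Real.exp_log hw0, Real.exp_log hM0]
    have hterm : η₀ * Real.exp (-η₁ * (u⁻¹) ^ η₂) ≤ w / 2 := by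
      rw [hexp, show η₀ * (w/M) = η₀*w/M from by ring,
        div_le_div_iff₀ hM0 two_pos]
      nlinarith
    have hub := (hKstar w ⟨hw0, hwa⟩).1 ⟨u, hu0.le, rfl⟩
    have hmid : u * w / 2 ≤ u*w - u*(η₀ * Real.exp (-η₁ * (u⁻¹) ^ η₂)) := by
      nlinarith [mul_le_mul_of_nonneg_left hterm hu0.le]
    calc (η₁ / L) ^ (1/η₂) * w / 2 = u * w / 2 := by rw [hudef]
      _ ≤ _ := hmid
      _ ≤ Kstar w := hub
  have keyPos : ∀ w : ℝ, 0 < w → w ≤ a → 0 < Kstar w := by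
    intro w hw0 hwa
    have hL0 : (0:ℝ) < Real.log M - Real.log w := by linarith [hLpos w hw0 hwa]
    have hA : (0:ℝ) < (η₁ / (Real.log M - Real.log w)) ^ (1/η₂) :=
      Real.rpow_pos_of_pos (div_pos h1 hL0) _
    exact lt_of_lt_of_le (div_pos (mul_pos hA hw0) two_pos) (keyA w hw0 hwa)
  have keyMono : ∀ w : ℝ, 0 < w → w ≤ a → ∀ w' : ℝ, 0 < w' → w' ≤ a →
      w ≤ w' → Kstar w ≤ Kstar w' := by
    intro w hw0 hwa w' hw0' hwa' hle
    refine (hKstar w ⟨hw0, hwa⟩).2 ?_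
    rintro x ⟨u, hu, rfl⟩
    have h1' : u * w - u * (η₀ * Real.exp (-η₁ * (u⁻¹) ^ η₂)) ≤
        u * w' - u * (η₀ * Real.exp (-η₁ * (u⁻¹) ^ η₂)) := by
      have := mul_le_mul_of_nonneg_left hle hu
      linarith
    exact h1'.trans ((hKstar w' ⟨hw0', hwa'⟩).1 ⟨u, hu, rfl⟩)
  have keyInv : ∀ w : ℝ, 0 < w → w ≤ a →
      (Kstar w)⁻¹ ≤ 2 * w⁻¹ * ((Real.log M - Real.log w) / η₁) ^ (1/η₂) := by
    intro w hw0 hwa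
    have hL0 : (0:ℝ) < Real.log M - Real.log w := by linarith [hLpos w hw0 hwa]
    have hbase : (0:ℝ) < η₁ / (Real.log M - Real.log w) := div_pos h1 hL0
    have hA : (0:ℝ) < (η₁ / (Real.log M - Real.log w)) ^ (1/η₂) :=
      Real.rpow_pos_of_pos hbase _
    have h2' : (0:ℝ) < (η₁ / (Real.log M - Real.log w)) ^ (1/η₂) * w / 2 :=
      div_pos (mul_pos hA hw0) two_pos
    have h4 := inv_anti₀ h2' (keyA w hw0 hwa)
    refine h4.trans (le_of_eq ?_)
    have e1 : ((Real.log M - Real.log w)/η₁) ^ (1/η₂)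
        = ((η₁/(Real.log M - Real.log w)) ^ (1/η₂))⁻¹ := by
      rw [← Real.inv_rpow hbase.le, inv_div]
    rw [e1]
    field_simp
  constructor
  · -- Part 1
    refine ⟨(η₁/2) ^ (1/η₂) / 2,
      div_pos (Real.rpow_pos_of_pos (div_pos h1 two_pos) _) two_pos,
      min a M⁻¹, lt_min ha0 (inv_pos.mpr hM0), ?_⟩
    intro w hw
    obtain ⟨hw0, hww⟩ := hw
    have hwa : w ≤ a := le_of_lt (lt_of_lt_of_le hww (min_le_left _ _))
    have hwM : w < M⁻¹ := lt_of_lt_of_le hww (min_le_right _ _)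
    have hlogw : Real.log w < -Real.log M := by
      have := Real.log_lt_log hw0 hwM
      rwa [Real.log_inv] at this
    have hX' : Real.log (1/w) = -Real.log w := by rw [one_div, Real.log_inv]
    set X : ℝ := Real.log (1/w) with hX
    have hX0 : 0 < X := by rw [hX']; linarith
    have hL0 : 0 < Real.log M - Real.log w := by linarith [hLpos w hw0 hwa]
    have hL2X : Real.log M - Real.log w ≤ 2 * X := by rw [hX']; linarith
    have hstep : (η₁ / (2*X)) ^ (1/η₂) ≤
        (η₁ / (Real.log M - Real.log w)) ^ (1/η₂) :=
      Real.rpow_le_rpow (le_of_lt (div_pos h1 (mul_pos two_pos hX0)))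
        (div_le_div_of_nonneg_left h1.le hL0 hL2X)
        (one_div_nonneg.mpr h2.le)
    have hsplit : (η₁ / (2*X)) ^ (1/η₂) = (η₁/2) ^ (1/η₂) * X ^ (-(1/η₂)) := by
      rw [show η₁/(2*X) = (η₁/2) * X⁻¹ by field_simp,
        Real.mul_rpow (by positivity) (by positivity),
        Real.inv_rpow hX0.le, ← Real.rpow_neg hX0.le]
    calc (η₁/2) ^ (1/η₂) / 2 * w * X ^ (-(1/η₂))
        = (η₁/2) ^ (1/η₂) * X ^ (-(1/η₂)) * w / 2 := by ring
      _ = (η₁ / (2*X)) ^ (1/η₂) * w / 2 := by rw [hsplit]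
      _ ≤ (η₁ / (Real.log M - Real.log w)) ^ (1/η₂) * w / 2 := by gcongr
      _ ≤ Kstar w := keyA w hw0 hwa
  · -- Part 2
    set κ : ℝ := 2*η₁*η₂/(1+η₂) with hκdef
    have hκ0 : 0 < κ := div_pos (by nlinarith) h1η₂
    set al : ℝ := η₂/(1+η₂) with hal
    have hal0 : 0 < al := div_pos h2 h1η₂
    refine ⟨M, hM0, η₁ / κ ^ al,
      div_pos h1 (Real.rpow_pos_of_pos hκ0 _), ?_⟩
    intro t ht
    set s : ℝ := (t/κ) ^ al with hs
    have hs0 : 0 < s := Real.rpow_pos_of_pos (div_pos ht hκ0) _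
    set z : ℝ := M * Real.exp (-(η₁ * s)) with hz
    have hz0 : 0 < z := mul_pos hM0 (Real.exp_pos _)
    have hzeq : z = M * Real.exp (-(η₁ / κ ^ al) * t ^ al) := by
      rw [hz]
      congr 2
      rw [hs, Real.div_rpow ht.le hκ0.le]
      ring
    rcases le_or_gt a z with hza | hza
    · have h5 := hFinv_range t ht
      calc Finv t ≤ z := le_trans h5.2.le hza
        _ = _ := hzeq
    · have hzIoo : z ∈ Set.Ioo (0:ℝ) a := ⟨hz0, hza⟩
      have hlogz : Real.log z = Real.log M - η₁ * s := by
        rw [hz, Real.log_mul (ne_of_gt hM0) (Real.exp_ne_zero _), Real.log_exp]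
        ring
      have hii : IntervalIntegrable (fun w => (Kstar w)⁻¹)
          MeasureTheory.volume z a := by
        apply AntitoneOn.intervalIntegrable
        rw [Set.uIcc_of_le hza.le]
        intro x hx y hy hxy
        exact inv_anti₀ (keyPos x (lt_of_lt_of_le hz0 hx.1) hx.2)
          (keyMono x (lt_of_lt_of_le hz0 hx.1) hx.2 y (lt_of_lt_of_le hz0 hy.1) hy.2 hxy)
      set g : ℝ → ℝ :=
        fun w => 2 * w⁻¹ * ((Real.log M - Real.log w)/η₁) ^ (1/η₂) with hg
      have hgcont : ContinuousOn g (Set.Icc z a) := by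
        apply ContinuousOn.mul
        · exact continuousOn_const.mul (continuousOn_id.inv₀
            (fun x hx => ne_of_gt (lt_of_lt_of_le hz0 hx.1)))
        · apply ContinuousOn.rpow_const
          · exact (continuousOn_const.sub (Real.continuousOn_log.mono
              (fun x hx => by
                simp only [Set.mem_compl_iff, Set.mem_singleton_iff]
                exact ne_of_gt (lt_of_lt_of_le hz0 hx.1)))).div_const η₁
          · intro x hx
            exact Or.inr (by positivity)
      have hgii : IntervalIntegrable g MeasureTheory.volume z a := by
        apply ContinuousOn.intervalIntegrable
        rwa [Set.uIcc_of_le hza.le]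
      set q : ℝ := 1/η₂ + 1 with hq
      set H : ℝ → ℝ :=
        fun w => -κ * ((Real.log M - Real.log w)/η₁) ^ q with hH
      have hderiv : ∀ x ∈ Set.Icc z a, HasDerivAt H (g x) x := by
        intro x hx
        have hx0 : 0 < x := lt_of_lt_of_le hz0 hx.1
        have hb : 0 < (Real.log M - Real.log x)/η₁ :=
          div_pos (by linarith [hLpos x hx0 hx.2]) h1
        have d1 : HasDerivAt (fun w => (Real.log M - Real.log w)/η₁)
            (-x⁻¹/η₁) x := by
          have := ((Real.hasDerivAt_log (ne_of_gt hx0)).const_sub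
            (Real.log M)).div_const η₁
          simpa using this
        have d2 := (d1.rpow_const (p := q) (Or.inl (ne_of_gt hb))).const_mul (-κ)
        have heq : -κ * (-x⁻¹/η₁ * q * ((Real.log M - Real.log x)/η₁) ^ (q-1))
            = g x := by
          rw [hg, hq]
          simp only
          rw [show (1/η₂ + 1) - 1 = 1/η₂ by ring, hκdef]
          field_simp
        rw [hH]
        simpa [heq] using d2
      have hFTC : ∫ w in z..a, g w = H a - H z :=
        intervalIntegral.integral_eq_sub_of_hasDerivAt
          (fun x hx => hderiv x (by rwa [Set.uIcc_of_le hza.le] at hx)) hgii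
      have hmono := intervalIntegral.integral_mono_on hza.le hii hgii
        (fun x hx => keyInv x (lt_of_lt_of_le hz0 hx.1) hx.2)
      have hHa : H a ≤ 0 := by
        have hb : (0:ℝ) ≤ (Real.log M - Real.log a)/η₁ :=
          le_of_lt (div_pos (by linarith [hLpos a ha0 le_rfl]) h1)
        have hr := Real.rpow_nonneg hb q
        rw [hH]
        simp only
        nlinarith
      have hHz : H z = -κ * s ^ q := by
        rw [hH]
        simp only
        rw [hlogz, show (Real.log M - (Real.log M - η₁*s))/η₁ = s by field_simp; ring]
      have hsq : κ * s ^ q = t := by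
        rw [hs, ← Real.rpow_mul (le_of_lt (div_pos ht hκ0)),
          show al * q = 1 by rw [hal, hq]; field_simp,
          Real.rpow_one]
        field_simp
      have hFle : (∫ w in z..a, (Kstar w)⁻¹) ≤ t := by
        calc (∫ w in z..a, (Kstar w)⁻¹) ≤ ∫ w in z..a, g w := hmono
          _ = H a - H z := hFTC
          _ ≤ -H z := by linarith
          _ = κ * s ^ q := by rw [hHz]; ring
          _ = t := hsq
      have hFpos : 0 < ∫ w in z..a, (Kstar w)⁻¹ :=
        intervalIntegral.intervalIntegral_pos_of_pos_on hii
          (fun x hx => inv_pos.mpr (keyPos x (lt_trans hz0 hx.1) hx.2.le)) hza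
      have hFz := hFinv z hzIoo
      have hanti := hFinv_anti (Set.mem_Ioi.mpr hFpos) (Set.mem_Ioi.mpr ht) hFle
      rw [hFz] at hanti
      calc Finv t ≤ z := hanti
        _ = _ := hzeq
end

section
/- Weak dissipation to decay for weak Poincaré-type processes: suppose H: [0,∞) → (0,∞) and D: [0,∞) → [0,∞) satisfy H'(t) = -D(t), and for all s > 0, H(t) ≤ s D(t) + β(s) Φ₀, where Φ₀ > 0 is a constant and β is decreasing with β(s) → 0. Then D(t)/Φ₀ ≥ K*(H(t)/Φ₀), where K*(w) = sup_{u ≥ 0}{uw - u β(1/u)}. Consequently, if H(0) ≤ a Φ₀, then H(t) ≤ Φ₀ F_a^{-1}(t) with F_a(z) = ∫_z^a dw/K*(w). -/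
open Real Set Filter intervalIntegral

/-- Weak dissipation to decay: the weak dissipation inequality `H ≤ sD + β(s)Φ₀`
yields `D/Φ₀ ≥ K*(H/Φ₀)` and hence `H(t) ≤ Φ₀ F_a⁻¹(t)`. -/
theorem stmt18
    (Φ₀ a : ℝ) (hΦ : 0 < Φ₀) (ha : 0 < a)
    (β : ℝ → ℝ) (hβ_anti : AntitoneOn β (Set.Ioi 0))
    (hβ_lim : Tendsto β atTop (nhds 0))
    (H D : ℝ → ℝ)
    (hH : ∀ t ≥ (0:ℝ), HasDerivAt H (-D t) t)
    (hD : ∀ t ≥ (0:ℝ), 0 ≤ D t)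
    (hHpos : ∀ t ≥ (0:ℝ), 0 < H t)
    (hweak : ∀ s > (0:ℝ), ∀ t ≥ (0:ℝ), H t ≤ s * D t + β s * Φ₀)
    (Kstar : ℝ → ℝ)
    (hKstar : ∀ w > (0:ℝ), IsLUB {x | ∃ u ≥ (0:ℝ), x = u * w - u * β u⁻¹} (Kstar w))
    (Finv : ℝ → ℝ)
    (hFinv : ∀ z ∈ Set.Ioo (0:ℝ) a, Finv (∫ w in z..a, (Kstar w)⁻¹) = z)
    (hFinv_range : ∀ t > (0:ℝ), Finv t ∈ Set.Ioo (0:ℝ) a)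
    (hFinv_anti : AntitoneOn Finv (Set.Ioi 0))
    (hH0 : H 0 ≤ a * Φ₀) :
    (∀ t ≥ (0:ℝ), Kstar (H t / Φ₀) ≤ D t / Φ₀) ∧
    (∀ t > (0:ℝ), H t ≤ Φ₀ * Finv t) := by
  -- every element of the sup-set is below Kstar
  have hmem : ∀ w > (0:ℝ), ∀ u ≥ (0:ℝ), u * w - u * β u⁻¹ ≤ Kstar w := by
    intro w hw u hu
    exact (hKstar w hw).1 ⟨u, hu, rfl⟩
  -- Kstar is positive on positive arguments
  have hKpos : ∀ w > (0:ℝ), 0 < Kstar w := by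
    intro w hw
    obtain ⟨s, hs1, hs0⟩ : ∃ s, β s < w ∧ (0:ℝ) < s :=
      ((hβ_lim.eventually_lt_const hw).and (eventually_gt_atTop 0)).exists
    have hsi : 0 < s⁻¹ := inv_pos.mpr hs0
    have h1 := hmem w hw s⁻¹ hsi.le
    rw [inv_inv] at h1
    have : 0 < s⁻¹ * w - s⁻¹ * β s := by nlinarith
    linarith
  -- Part 1
  have part1 : ∀ t ≥ (0:ℝ), Kstar (H t / Φ₀) ≤ D t / Φ₀ := by
    intro t ht
    have hwpos : 0 < H t / Φ₀ := div_pos (hHpos t ht) hΦ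
    refine (hKstar _ hwpos).2 ?_
    rintro x ⟨u, hu, rfl⟩
    rcases hu.lt_or_eq with h | h
    · have hs : 0 < u⁻¹ := inv_pos.mpr h
      have hw := hweak u⁻¹ hs t ht
      have hui : u * u⁻¹ = 1 := mul_inv_cancel₀ (ne_of_gt h)
      have goal' : u * H t - u * β u⁻¹ * Φ₀ ≤ D t := by
        have hw2 : u * H t ≤ D t + u * (β u⁻¹ * Φ₀) := by
          calc u * H t ≤ u * (u⁻¹ * D t + β u⁻¹ * Φ₀) :=
                mul_le_mul_of_nonneg_left hw h.le
          _ = (u * u⁻¹) * D t + u * (β u⁻¹ * Φ₀) := by ring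
          _ = D t + u * (β u⁻¹ * Φ₀) := by rw [hui]; ring
        linarith
      have heq : u * (H t / Φ₀) - u * β u⁻¹ = (u * H t - u * β u⁻¹ * Φ₀) / Φ₀ := by
        field_simp
      rw [heq]
      exact div_le_div_of_nonneg_right goal' hΦ.le
    · rw [← h]
      simpa using div_nonneg (hD t ht) hΦ.le
  refine ⟨part1, ?_⟩
  -- Kstar is monotone on Ioi 0
  have hKmono : ∀ w₁ w₂ : ℝ, 0 < w₁ → w₁ ≤ w₂ → Kstar w₁ ≤ Kstar w₂ := by
    intro w₁ w₂ h1 h12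
    refine (hKstar w₁ h1).2 ?_
    rintro x ⟨u, hu, rfl⟩
    have : u * w₁ - u * β u⁻¹ ≤ u * w₂ - u * β u⁻¹ := by nlinarith
    exact this.trans (hmem _ (h1.trans_le h12) u hu)
  -- Kstar is convex on Ioi 0 (sup of affine functions)
  have hKconv : ConvexOn ℝ (Ioi 0) Kstar := by
    refine ⟨convex_Ioi 0, ?_⟩
    intro x hx y hy p q hp hq hpq
    simp only [smul_eq_mul]
    have hx' : (0:ℝ) < x := hx
    have hy' : (0:ℝ) < y := hy
    have hxy : (0:ℝ) < p * x + q * y := by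
      rcases hp.lt_or_eq with hp' | hp'
      · nlinarith [mul_nonneg hq hy'.le]
      · have hq1 : q = 1 := by linarith
        rw [← hp', hq1]; simpa using hy'
    refine (hKstar _ hxy).2 ?_
    rintro z ⟨u, hu, rfl⟩
    have h1 := hmem x hx' u hu
    have h2 := hmem y hy' u hu
    have key : u * (p * x + q * y) - u * β u⁻¹
        = p * (u * x - u * β u⁻¹) + q * (u * y - u * β u⁻¹) := by
      linear_combination (u * β u⁻¹) * hpq
    rw [key]
    have := mul_le_mul_of_nonneg_left h1 hp
    have := mul_le_mul_of_nonneg_left h2 hq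
    linarith
  have hKcont : ContinuousOn Kstar (Ioi 0) := hKconv.continuousOn isOpen_Ioi
  have hfcont : ContinuousOn (fun w => (Kstar w)⁻¹) (Ioi 0) :=
    hKcont.inv₀ fun x hx => (hKpos x hx).ne'
  -- interval integrability
  have hInt : ∀ z : ℝ, 0 < z → IntervalIntegrable (fun w => (Kstar w)⁻¹) MeasureTheory.volume z a := by
    intro z hz
    refine ContinuousOn.intervalIntegrable (hfcont.mono ?_)
    intro x hx
    exact lt_of_lt_of_le (lt_min hz ha) hx.1
  -- FTC: the primitive F
  set F : ℝ → ℝ := fun z => ∫ w in z..a, (Kstar w)⁻¹ with hF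
  have hF' : ∀ z : ℝ, 0 < z → HasDerivAt F (-(Kstar z)⁻¹) z := by
    intro z hz
    exact intervalIntegral.integral_hasDerivAt_left (hInt z hz)
      (ContinuousOn.stronglyMeasurableAtFilter isOpen_Ioi hfcont z hz)
      (hfcont.continuousAt (isOpen_Ioi.mem_nhds hz))
  set g : ℝ → ℝ := fun t => H t / Φ₀ with hgdef
  have hgpos : ∀ t ≥ (0:ℝ), 0 < g t := fun t ht => div_pos (hHpos t ht) hΦ
  have hg' : ∀ t ≥ (0:ℝ), HasDerivAt g (-D t / Φ₀) t := by
    intro t ht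
    exact (hH t ht).div_const Φ₀
  -- derivative of G = F ∘ g
  have hG' : ∀ t ≥ (0:ℝ), HasDerivAt (fun τ => F (g τ)) ((Kstar (g t))⁻¹ * (D t / Φ₀)) t := by
    intro t ht
    have := (hF' (g t) (hgpos t ht)).comp t (hg' t ht)
    exact this.congr_deriv (by ring)
  -- D is strictly positive, hence H is strictly decreasing
  have hDpos : ∀ t ≥ (0:ℝ), 0 < D t := by
    intro t ht
    have := (hKpos (g t) (hgpos t ht)).trans_le (part1 t ht)
    have h2 : 0 < D t / Φ₀ := this
    have h3 := mul_pos h2 hΦ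
    rwa [div_mul_cancel₀ _ hΦ.ne'] at h3
  -- the comparison function φ is monotone
  have hφmono : MonotoneOn (fun τ => F (g τ) - τ) (Ici 0) := by
    refine monotoneOn_of_deriv_nonneg (convex_Ici 0) ?_ ?_ ?_
    · intro t ht
      exact ((hG' t ht).sub (hasDerivAt_id t)).continuousAt.continuousWithinAt
    · intro t ht
      rw [interior_Ici] at ht
      exact (((hG' t ht.le).sub (hasDerivAt_id t)).differentiableAt).differentiableWithinAt
    · intro t ht
      rw [interior_Ici] at ht
      have hder : HasDerivAt (fun τ => F (g τ) - τ)
          ((Kstar (g t))⁻¹ * (D t / Φ₀) - 1) t := (hG' t ht.le).sub (hasDerivAt_id t)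
      rw [hder.deriv]
      have kpos := hKpos (g t) (hgpos t ht.le)
      have h1 : (1:ℝ) ≤ (Kstar (g t))⁻¹ * (D t / Φ₀) := by
        rw [← inv_mul_cancel₀ (ne_of_gt kpos)]
        exact mul_le_mul_of_nonneg_left (part1 t ht.le) (inv_nonneg.mpr kpos.le)
      linarith
  -- F (g 0) ≥ 0
  have hg0a : g 0 ≤ a := by
    rw [hgdef]
    exact (div_le_iff₀ hΦ).mpr (by linarith [hH0])
  have hF0 : 0 ≤ F (g 0) := by
    apply intervalIntegral.integral_nonneg hg0a
    intro x hx
    have : 0 < x := lt_of_lt_of_le (hgpos 0 le_rfl) hx.1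
    exact (inv_nonneg).mpr (hKpos x this).le
  -- H is strictly decreasing on Ici 0
  have hHanti : StrictAntiOn H (Ici 0) := by
    refine strictAntiOn_of_deriv_neg (convex_Ici 0) ?_ ?_
    · intro t ht
      exact (hH t ht).continuousAt.continuousWithinAt
    · intro t ht
      rw [interior_Ici] at ht
      rw [(hH t ht.le).deriv]
      exact neg_neg_of_pos (hDpos t ht.le)
  intro t ht
  -- g t ∈ Ioo 0 a
  have hgt_lt : g t < a := by
    have : H t < H 0 := hHanti self_mem_Ici ht.le ht
    rw [hgdef]
    exact (div_lt_iff₀ hΦ).mpr (by linarith)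
  have hgtmem : g t ∈ Ioo (0:ℝ) a := ⟨hgpos t ht.le, hgt_lt⟩
  -- F (g t) ≥ t
  have hmon := hφmono (self_mem_Ici) (mem_Ici.mpr ht.le) ht.le
  simp only [sub_zero] at hmon
  have hFgt : t ≤ F (g t) := by linarith
  have hFgtpos : 0 < F (g t) := lt_of_lt_of_le ht hFgt
  -- conclude
  have hfin := hFinv (g t) hgtmem
  have : Finv (F (g t)) = g t := hfin
  have hle : Finv (F (g t)) ≤ Finv t := hFinv_anti (mem_Ioi.mpr ht) (mem_Ioi.mpr hFgtpos) hFgt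
  rw [this] at hle
  rw [hgdef] at hle
  calc H t = Φ₀ * (H t / Φ₀) := by field_simp
  _ ≤ Φ₀ * Finv t := by
      exact mul_le_mul_of_nonneg_left hle hΦ.le
end
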